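/- arXiv:1309.7649 — 3 statements merged into one kernel-verified Lean document; each statement's English description precedes it below -/
import Mathlib

section
/- Let p ∈ (0,1] and let G be a separable p-Banach space of almost universal disposition for finite-dimensional p-Banach spaces. Then every separable p-Banach space S admits a linear isometric embedding into G, i.e. there is a linear map e : S → G with N_G(e s) = N_S(s) for all s ∈ S. -/
/- Common framework: p-normed and p-Banach spaces, following the paper's definitions. -/

namespace PGurarii

/-- A `p`-norm on a real vector space: `N x = 0 ↔ x = 0`, absolute homogeneity, and the
`p`-triangle inequality `N (x + y) ^ p ≤ N x ^ p + N y ^ p` (values in `ℝ₊`). -/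
structure PNorm (p : ℝ) (X : Type) [AddCommGroup X] [Module ℝ X] where
  N : X → ℝ
  nonneg : ∀ x : X, 0 ≤ N x
  eq_zero_iff : ∀ x : X, N x = 0 ↔ x = 0
  smul_eq : ∀ (a : ℝ) (x : X), N (a • x) = |a| * N x
  add_pow_le : ∀ x y : X, N (x + y) ^ p ≤ N x ^ p + N y ^ p

/-- Completeness (sequential) for the induced metric `d(x,y) = N (x - y) ^ p`. -/
def IsCompleteP (p : ℝ) {X : Type} [AddCommGroup X] [Module ℝ X] (NX : PNorm p X) : Prop :=
  ∀ u : ℕ → X,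
    (∀ ε : ℝ, 0 < ε → ∃ n₀ : ℕ, ∀ m ≥ n₀, ∀ n ≥ n₀, NX.N (u m - u n) ^ p < ε) →
    ∃ x : X, ∀ ε : ℝ, 0 < ε → ∃ n₀ : ℕ, ∀ n ≥ n₀, NX.N (u n - x) ^ p < ε

/-- Separability for the induced metric topology. -/
def IsSeparableP (p : ℝ) {X : Type} [AddCommGroup X] [Module ℝ X] (NX : PNorm p X) : Prop :=
  ∃ D : Set X, D.Countable ∧ ∀ x : X, ∀ ε : ℝ, 0 < ε → ∃ y ∈ D, NX.N (x - y) ^ p < ε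

/-- A subspace is closed for the induced metric topology. -/
def IsClosedSubP (p : ℝ) {X : Type} [AddCommGroup X] [Module ℝ X] (NX : PNorm p X)
    (S : Submodule ℝ X) : Prop :=
  ∀ x : X, (∀ ε : ℝ, 0 < ε → ∃ y ∈ S, NX.N (x - y) ^ p < ε) → x ∈ S

/-- The restriction of a `p`-norm to a subspace. -/
def PNorm.restrict {p : ℝ} {X : Type} [AddCommGroup X] [Module ℝ X]
    (NX : PNorm p X) (S : Submodule ℝ X) : PNorm p S where
  N x := NX.N x
  nonneg x := NX.nonneg x
  eq_zero_iff x := by rw [NX.eq_zero_iff]; exact ZeroMemClass.coe_eq_zero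
  smul_eq a x := NX.smul_eq a x
  add_pow_le x y := NX.add_pow_le x y

/-- A `p`-Banach space: a real vector space with a `p`-norm, complete for the induced metric. -/
structure PBanach (p : ℝ) where
  carrier : Type
  [addCommGroup : AddCommGroup carrier]
  [module : Module ℝ carrier]
  pnorm : PNorm p carrier
  complete : IsCompleteP p pnorm

attribute [instance] PBanach.addCommGroup PBanach.module

/-- `U` is of almost universal disposition for finite-dimensional `p`-Banach spaces: for every
`ε > 0`, every isometry from a subspace `X` of `U` (with the restricted `p`-norm) into a
finite-dimensional `p`-Banach space `Y` extends, after an `ε`-isometry `Y → U`, the inclusion. -/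
def AUD (p : ℝ) (U : Type) [AddCommGroup U] [Module ℝ U] (NU : PNorm p U) : Prop :=
  ∀ ε : ℝ, 0 < ε → ∀ Y : PBanach p, FiniteDimensional ℝ Y.carrier →
    ∀ (Xs : Submodule ℝ U) (g : Xs →ₗ[ℝ] Y.carrier),
      (∀ x : Xs, Y.pnorm.N (g x) = NU.N (x : U)) →
      ∃ f : Y.carrier →ₗ[ℝ] U,
        (∀ y, (1 - ε) * Y.pnorm.N y ≤ NU.N (f y) ∧ NU.N (f y) ≤ (1 + ε) * Y.pnorm.N y) ∧
        ∀ x : Xs, f (g x) = (x : U)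

/-- `U` is of universal disposition for separable `p`-Banach spaces. -/
def UD (p : ℝ) (U : Type) [AddCommGroup U] [Module ℝ U] (NU : PNorm p U) : Prop :=
  ∀ Y : PBanach p, IsSeparableP p Y.pnorm →
    ∀ (Xs : Submodule ℝ U), IsClosedSubP p NU Xs →
      ∀ g : Xs →ₗ[ℝ] Y.carrier, (∀ x : Xs, Y.pnorm.N (g x) = NU.N (x : U)) →
        ∃ f : Y.carrier →ₗ[ℝ] U, (∀ y, NU.N (f y) = Y.pnorm.N y) ∧ ∀ x : Xs, f (g x) = (x : U)

end PGurarii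

namespace PGurarii

variable {p : ℝ} {X : Type} [AddCommGroup X] [Module ℝ X]

/-- The `p`-th power functional of a `p`-norm. -/
noncomputable def PNorm.phi (NX : PNorm p X) (x : X) : ℝ := NX.N x ^ p

lemma PNorm.phi_nonneg (NX : PNorm p X) (x : X) : 0 ≤ NX.phi x :=
  Real.rpow_nonneg (NX.nonneg x) p

lemma PNorm.N_zero (NX : PNorm p X) : NX.N 0 = 0 := (NX.eq_zero_iff 0).2 rfl

lemma PNorm.phi_zero (hp0 : 0 < p) (NX : PNorm p X) : NX.phi 0 = 0 := by
  simp [PNorm.phi, NX.N_zero, Real.zero_rpow hp0.ne']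

lemma PNorm.phi_eq_zero_iff (hp0 : 0 < p) (NX : PNorm p X) (x : X) :
    NX.phi x = 0 ↔ x = 0 := by
  rw [PNorm.phi, Real.rpow_eq_zero (NX.nonneg x) hp0.ne', NX.eq_zero_iff]

lemma PNorm.phi_add_le (NX : PNorm p X) (x y : X) :
    NX.phi (x + y) ≤ NX.phi x + NX.phi y := NX.add_pow_le x y

lemma PNorm.phi_smul (NX : PNorm p X) (a : ℝ) (x : X) :
    NX.phi (a • x) = |a| ^ p * NX.phi x := by
  rw [PNorm.phi, NX.smul_eq, Real.mul_rpow (abs_nonneg a) (NX.nonneg x)]; rfl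

lemma PNorm.phi_neg (hp0 : 0 < p) (NX : PNorm p X) (x : X) : NX.phi (-x) = NX.phi x := by
  have h := NX.phi_smul (-1) x
  simpa [Real.one_rpow] using h

lemma PNorm.phi_sub_comm (hp0 : 0 < p) (NX : PNorm p X) (x y : X) :
    NX.phi (x - y) = NX.phi (y - x) := by
  have := NX.phi_neg hp0 (y - x); simpa [neg_sub] using this

lemma PNorm.phi_sub_le (hp0 : 0 < p) (NX : PNorm p X) (x y z : X) :
    NX.phi (x - z) ≤ NX.phi (x - y) + NX.phi (y - z) := by
  have := NX.phi_add_le (x - y) (y - z); simpa using this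

lemma PNorm.abs_phi_sub_phi (hp0 : 0 < p) (NX : PNorm p X) (x y : X) :
    |NX.phi x - NX.phi y| ≤ NX.phi (x - y) := by
  rw [abs_sub_le_iff]
  constructor
  · have := NX.phi_add_le (x - y) y; simp at this; linarith
  · have := NX.phi_add_le (y - x) x; simp at this
    have h2 := NX.phi_sub_comm hp0 x y; linarith

/-- Build a `p`-norm from a subadditive `p`-homogeneous functional (the `p`-th power). -/
noncomputable def mkPNorm (hp0 : 0 < p) (M : X → ℝ) (h0 : ∀ x, 0 ≤ M x) (hz : ∀ x, M x = 0 ↔ x = 0)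
    (hs : ∀ (a : ℝ) (x : X), M (a • x) = |a| ^ p * M x)
    (ha : ∀ x y, M (x + y) ≤ M x + M y) : PNorm p X where
  N x := M x ^ (1/p)
  nonneg x := Real.rpow_nonneg (h0 x) _
  eq_zero_iff x := by
    rw [Real.rpow_eq_zero (h0 x) (by positivity), hz]
  smul_eq a x := by
    show (M (a • x)) ^ (1/p) = |a| * (M x) ^ (1/p)
    rw [hs, Real.mul_rpow (by positivity) (h0 x), ← Real.rpow_mul (abs_nonneg a),
      mul_one_div_cancel hp0.ne', Real.rpow_one]
  add_pow_le x y := by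
    have e : ∀ z : X, ((M z) ^ (1/p)) ^ p = M z := fun z => by
      rw [← Real.rpow_mul (h0 z), one_div_mul_cancel hp0.ne', Real.rpow_one]
    show ((M (x+y)) ^ (1/p)) ^ p ≤ ((M x) ^ (1/p)) ^ p + ((M y) ^ (1/p)) ^ p
    rw [e, e, e]; exact ha x y

lemma mkPNorm_pow (hp0 : 0 < p) (M : X → ℝ) (h0 : ∀ x, 0 ≤ M x) (hz hs ha) (x : X) :
    (mkPNorm hp0 M h0 hz hs ha).N x ^ p = M x := by
  show (M x ^ (1/p)) ^ p = M x
  rw [← Real.rpow_mul (h0 x), one_div_mul_cancel hp0.ne', Real.rpow_one]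

end PGurarii

namespace PGurarii

variable {p : ℝ} {X : Type} [AddCommGroup X] [Module ℝ X]

lemma le_csInf_add_csInf {s t : Set ℝ} (hs : s.Nonempty) (ht : t.Nonempty)
    (hbs : BddBelow s) (hbt : BddBelow t) {c : ℝ} (h : ∀ a ∈ s, ∀ b ∈ t, c ≤ a + b) :
    c ≤ sInf s + sInf t := by
  have h1 : ∀ a ∈ s, c - a ≤ sInf t := fun a ha =>
    le_csInf ht (fun b hb => by linarith [h a ha b hb])
  have h2 : c - sInf t ≤ sInf s := le_csInf hs (fun a ha => by linarith [h1 a ha])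
  linarith

lemma rpow_base_inj (hp0 : 0 < p) {a b : ℝ} (ha : 0 ≤ a) (hb : 0 ≤ b)
    (h : a ^ p = b ^ p) : a = b := by
  rcases lt_trichotomy a b with hlt | heq | hgt
  · exact absurd h (ne_of_lt (Real.rpow_lt_rpow ha hlt hp0))
  · exact heq
  · exact absurd h.symm (ne_of_lt (Real.rpow_lt_rpow hb hgt hp0))

lemma rpow_rpow_inv (hp0 : 0 < p) {a : ℝ} (ha : 0 ≤ a) : (a ^ p) ^ (1/p) = a := by
  rw [← Real.rpow_mul ha, mul_one_div_cancel hp0.ne', Real.rpow_one]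

lemma one_add_rpow_le (hp0 : 0 < p) (hp1 : p ≤ 1) {δ : ℝ} (hδ : 0 ≤ δ) :
    (1 + δ) ^ p ≤ 1 + δ := by
  calc (1 + δ) ^ p ≤ (1 + δ) ^ (1:ℝ) :=
        Real.rpow_le_rpow_of_exponent_le (by linarith) hp1
    _ = 1 + δ := Real.rpow_one _

lemma one_sub_le_rpow (hp0 : 0 < p) (hp1 : p ≤ 1) {δ : ℝ} (hδ0 : 0 ≤ δ) (hδ1 : δ ≤ 1) :
    1 - δ ≤ (1 - δ) ^ p := by
  rcases eq_or_lt_of_le hδ1 with h | h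
  · simp [← h]
    positivity
  · calc (1 - δ : ℝ) = (1 - δ) ^ (1:ℝ) := (Real.rpow_one _).symm
      _ ≤ (1 - δ) ^ p := Real.rpow_le_rpow_of_exponent_ge (by linarith) (by linarith) hp1

/-- Convert multiplicative `N`-bounds to `phi`-bounds. -/
lemma phi_bounds {Y : Type} [AddCommGroup Y] [Module ℝ Y]
    (hp0 : 0 < p) (NX : PNorm p X) (NY : PNorm p Y) {c : ℝ} (hc : 0 ≤ c)
    {x : X} {y : Y} (h : NY.N y ≤ c * NX.N x) : NY.phi y ≤ c ^ p * NX.phi x := by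
  have := Real.rpow_le_rpow (NY.nonneg y) h hp0.le
  rwa [Real.mul_rpow hc (NX.nonneg x)] at this

/-- A finite-dimensional space with a `p`-norm is complete. -/
lemma findim_isCompleteP (hp0 : 0 < p) (hp1 : p ≤ 1) [FiniteDimensional ℝ X]
    (NX : PNorm p X) : IsCompleteP p NX := by
  letI M : MetricSpace X :=
    { dist := fun x y => NX.phi (x - y)
      dist_self := fun x => by simp [NX.phi_zero hp0]
      dist_comm := fun x y => NX.phi_sub_comm hp0 x y
      dist_triangle := fun x y z => NX.phi_sub_le hp0 x y z
      eq_of_dist_eq_zero := fun {x y} h =>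
        sub_eq_zero.1 ((NX.phi_eq_zero_iff hp0 _).1 h) }
  have hdist : ∀ x y : X, dist x y = NX.phi (x - y) := fun _ _ => rfl
  haveI : IsUniformAddGroup X := by
    refine ⟨Metric.uniformContinuous_iff.2 fun ε hε => ⟨ε/2, by linarith, ?_⟩⟩
    rintro ⟨a₁, a₂⟩ ⟨b₁, b₂⟩ hab
    rw [Prod.dist_eq] at hab
    have h1 : dist a₁ b₁ < ε/2 := lt_of_le_of_lt (le_max_left _ _) hab
    have h2 : dist a₂ b₂ < ε/2 := lt_of_le_of_lt (le_max_right _ _) hab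
    calc dist (a₁ - a₂) (b₁ - b₂) = NX.phi ((a₁ - b₁) + (b₂ - a₂)) := by
          rw [hdist]; congr 1; abel
      _ ≤ NX.phi (a₁ - b₁) + NX.phi (b₂ - a₂) := NX.phi_add_le _ _
      _ = dist a₁ b₁ + dist a₂ b₂ := by
          rw [hdist, hdist, NX.phi_sub_comm hp0 b₂ a₂]
      _ < ε := by linarith
  haveI : ContinuousSMul ℝ X := by
    refine ⟨Metric.continuous_iff.2 ?_⟩
    rintro ⟨b, y⟩ ε hε
    set C₁ : ℝ := (|b| + 1) ^ p with hC₁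
    have hC₁pos : 0 < C₁ := Real.rpow_pos_of_pos (by positivity) p
    set C₂ : ℝ := NX.phi y + 1 with hC₂
    have hC₂pos : 0 < C₂ := by have := NX.phi_nonneg y; linarith
    refine ⟨min 1 (min (ε/(2*C₁)) ((ε/(2*C₂)) ^ (1/p))), by positivity, ?_⟩
    rintro ⟨a, x⟩ h
    rw [Prod.dist_eq] at h
    have hax : dist a b < min 1 (min (ε/(2*C₁)) ((ε/(2*C₂)) ^ (1/p))) :=
      lt_of_le_of_lt (le_max_left _ _) h
    have hxy : dist x y < min 1 (min (ε/(2*C₁)) ((ε/(2*C₂)) ^ (1/p))) :=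
      lt_of_le_of_lt (le_max_right _ _) h
    have hab1 : |a - b| < 1 := lt_of_lt_of_le hax (min_le_left _ _)
    have hab2 : |a - b| < (ε/(2*C₂)) ^ (1/p) :=
      lt_of_lt_of_le hax (le_trans (min_le_right _ _) (min_le_right _ _))
    have hxy2 : NX.phi (x - y) < ε/(2*C₁) :=
      lt_of_lt_of_le hxy (le_trans (min_le_right _ _) (min_le_left _ _))
    have habs : |a| ≤ |b| + 1 := by
      have := abs_sub_abs_le_abs_sub a b; linarith
    have key : dist (a • x) (b • y) ≤ |a| ^ p * NX.phi (x - y) + |a - b| ^ p * NX.phi y := by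
      rw [hdist]
      calc NX.phi (a • x - b • y) = NX.phi (a • (x - y) + (a - b) • y) := by
            congr 1; rw [smul_sub, sub_smul]; abel
        _ ≤ NX.phi (a • (x - y)) + NX.phi ((a - b) • y) := NX.phi_add_le _ _
        _ = |a| ^ p * NX.phi (x - y) + |a - b| ^ p * NX.phi y := by
            rw [NX.phi_smul, NX.phi_smul]
    have t1 : |a| ^ p * NX.phi (x - y) ≤ C₁ * NX.phi (x - y) := by
      have : |a| ^ p ≤ C₁ := Real.rpow_le_rpow (abs_nonneg a) habs hp0.le
      exact mul_le_mul_of_nonneg_right this (NX.phi_nonneg _)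
    have t2 : |a - b| ^ p < ε/(2*C₂) := by
      have h0 : (0:ℝ) < ε/(2*C₂) := by positivity
      have := Real.rpow_lt_rpow (abs_nonneg (a-b)) hab2 hp0
      rwa [← Real.rpow_mul h0.le, one_div_mul_cancel hp0.ne', Real.rpow_one] at this
    have t2' : |a - b| ^ p * NX.phi y ≤ (ε/(2*C₂)) * C₂ := by
      have h1 : |a - b| ^ p * NX.phi y ≤ |a - b| ^ p * C₂ := by
        apply mul_le_mul_of_nonneg_left (show NX.phi y ≤ C₂ by
          have := NX.phi_nonneg y; simp only [hC₂]; linarith)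
          (Real.rpow_nonneg (abs_nonneg _) p)
      have h2 : |a - b| ^ p * C₂ ≤ (ε/(2*C₂)) * C₂ :=
        mul_le_mul_of_nonneg_right t2.le hC₂pos.le
      exact h1.trans h2
    have t1' : C₁ * NX.phi (x - y) < C₁ * (ε/(2*C₁)) :=
      (mul_lt_mul_iff_right₀ hC₁pos).2 hxy2
    have e1 : C₁ * (ε/(2*C₁)) = ε/2 := by field_simp
    have e2 : (ε/(2*C₂)) * C₂ = ε/2 := by field_simp
    have u1 : C₁ * NX.phi (x - y) < ε/2 := by rw [← e1]; exact t1'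
    have u2 : |a - b| ^ p * NX.phi y ≤ ε/2 := by rw [← e2]; exact t2'
    linarith
  haveI : CompleteSpace X := FiniteDimensional.complete ℝ X
  intro u hu
  have hc : CauchySeq u := Metric.cauchySeq_iff.2 (by
    intro ε hε
    obtain ⟨n₀, hn₀⟩ := hu ε hε
    exact ⟨n₀, fun m hm n hn => hn₀ m hm n hn⟩)
  obtain ⟨x, hx⟩ := cauchySeq_tendsto_of_complete hc
  refine ⟨x, fun ε hε => ?_⟩
  obtain ⟨N, hN⟩ := Metric.tendsto_atTop.1 hx ε hε
  exact ⟨N, fun n hn => hN n hn⟩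

end PGurarii

namespace PGurarii

set_option maxHeartbeats 1000000 in
/-- The key one-step extension lemma via amalgamation. -/
lemma step_lemma (p : ℝ) (hp0 : 0 < p) (hp1 : p ≤ 1)
    (G : PBanach p) (hGaud : AUD p G.carrier G.pnorm)
    (S : PBanach p) (A B : Submodule ℝ S.carrier) (hAB : A ≤ B)
    (hB : FiniteDimensional ℝ B)
    {ε δ : ℝ} (hε0 : 0 < ε) (hε1 : ε < 1) (hδ0 : 0 < δ) (hδ1 : δ < 1)
    (f : A →ₗ[ℝ] G.carrier)
    (hf : ∀ a : A, (1-ε) * S.pnorm.N a ≤ G.pnorm.N (f a) ∧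
          G.pnorm.N (f a) ≤ (1+ε) * S.pnorm.N a) :
    ∃ f' : B →ₗ[ℝ] G.carrier,
      (∀ b : B, (1-δ) * S.pnorm.N b ≤ G.pnorm.N (f' b) ∧
        G.pnorm.N (f' b) ≤ (1+δ) * S.pnorm.N b) ∧
      ∀ a : A, G.pnorm.phi (f' ⟨a, hAB a.2⟩ - f a) ≤ 8 * ε * S.pnorm.phi (a : S.carrier) := by
  classical
  set NS := S.pnorm with hNS
  set NG := G.pnorm with hNG
  -- phi-form of the hypothesis
  have hfl : ∀ a : A, (1-ε)^p * NS.phi ↑a ≤ NG.phi (f a) := by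
    intro a
    have h := (hf a).1
    have h2 := Real.rpow_le_rpow (mul_nonneg (by linarith) (NS.nonneg _)) h hp0.le
    rwa [Real.mul_rpow (by linarith) (NS.nonneg _)] at h2
  have hfu : ∀ a : A, NG.phi (f a) ≤ (1+ε)^p * NS.phi ↑a := fun a =>
    phi_bounds hp0 NS NG (by linarith) (hf a).2
  set K : ℝ := (1+ε)^p - (1-ε)^p with hKdef
  have hsub1 : (1-ε:ℝ)^p ≤ 1 := Real.rpow_le_one (by linarith) (by linarith) hp0.le
  have hadd1 : (1:ℝ) ≤ (1+ε)^p := by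
    have := Real.one_rpow p
    calc (1:ℝ) = 1^p := (Real.one_rpow p).symm
      _ ≤ (1+ε)^p := Real.rpow_le_rpow (by norm_num) (by linarith) hp0.le
  have hK0 : 0 < K := sub_pos.2 (Real.rpow_lt_rpow (by linarith) (by linarith) hp0)
  have hK2 : K ≤ 2*ε := by
    have h1 := one_add_rpow_le hp0 hp1 hε0.le
    have h2 := one_sub_le_rpow hp0 hp1 hε0.le hε1.le
    rw [hKdef]; linarith
  have hK1a : 1 - (1-ε)^p ≤ K := by rw [hKdef]; linarith
  have hK1b : (1+ε)^p ≤ 1 + K := by rw [hKdef]; linarith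
  -- the amalgam functional
  set T : ↥B × ↥A → ↥A → ℝ := fun v x =>
    NS.phi ((v.1 : S.carrier) - ↑x) + NG.phi (f (v.2 + x)) + K * NS.phi ↑x with hT
  set M : ↥B × ↥A → ℝ := fun v => sInf (Set.range (T v)) with hM
  have hTnn : ∀ v x, 0 ≤ T v x := by
    intro v x
    have := NS.phi_nonneg ((v.1 : S.carrier) - ↑x)
    have := NG.phi_nonneg (f (v.2 + x))
    have := NS.phi_nonneg (↑x : S.carrier)
    have := hK0
    simp only [hT]; nlinarith
  have hbdd : ∀ v, BddBelow (Set.range (T v)) := fun v =>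
    ⟨0, by rintro t ⟨x, rfl⟩; exact hTnn v x⟩
  have hne : ∀ v, (Set.range (T v)).Nonempty := fun v => ⟨T v 0, ⟨0, rfl⟩⟩
  have hMle : ∀ v x, M v ≤ T v x := fun v x => csInf_le (hbdd v) ⟨x, rfl⟩
  have hMge : ∀ v (c : ℝ), (∀ x, c ≤ T v x) → c ≤ M v := fun v c h =>
    le_csInf (hne v) (by rintro t ⟨x, rfl⟩; exact h x)
  have hM0 : ∀ v, 0 ≤ M v := fun v => hMge v 0 (hTnn v)
  -- subadditivity
  have hMadd : ∀ v w, M (v + w) ≤ M v + M w := by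
    intro v w
    apply le_csInf_add_csInf (hne v) (hne w) (hbdd v) (hbdd w)
    rintro a ⟨x, rfl⟩ b ⟨x', rfl⟩
    refine le_trans (hMle (v + w) (x + x')) ?_
    simp only [hT]
    have e1 : (((v+w).1 : S.carrier)) - ↑(x + x') =
        ((v.1 : S.carrier) - ↑x) + ((w.1 : S.carrier) - ↑x') := by
      simp only [Prod.fst_add]; push_cast; abel
    have e2 : (v+w).2 + (x + x') = (v.2 + x) + (w.2 + x') := by
      show v.2 + w.2 + (x + x') = _; abel
    rw [e1, e2, map_add]
    have t1 := NS.phi_add_le ((v.1 : S.carrier) - ↑x) ((w.1 : S.carrier) - ↑x')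
    have t2 := NG.phi_add_le (f (v.2 + x)) (f (w.2 + x'))
    have t3 : NS.phi (↑(x + x') : S.carrier) ≤ NS.phi ↑x + NS.phi ↑x' := by
      push_cast; exact NS.phi_add_le _ _
    nlinarith [hK0.le]
  -- homogeneity
  have hMzero : M 0 = 0 := by
    refine le_antisymm ?_ (hM0 0)
    refine le_trans (hMle 0 0) ?_
    simp only [hT]
    simp [NS.phi_zero hp0, NG.phi_zero hp0]
  have hMsmul_le : ∀ (a : ℝ), a ≠ 0 → ∀ v, M (a • v) ≤ |a|^p * M v := by
    intro a ha v
    have key : ∀ x, T (a • v) (a • x) = |a|^p * T v x := by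
      intro x
      simp only [hT]
      have e1 : (((a • v).1 : S.carrier)) - ↑(a • x) = a • ((v.1 : S.carrier) - ↑x) := by
        simp only [Prod.smul_fst]; push_cast; rw [smul_sub]
      have e2 : (a • v).2 + a • x = a • (v.2 + x) := by
        show a • v.2 + a • x = _; rw [smul_add]
      have e3 : (↑(a • x) : S.carrier) = a • (↑x : S.carrier) := by push_cast; rfl
      rw [e1, e2, e3, map_smul, NS.phi_smul, NG.phi_smul, NS.phi_smul]
      ring
    have hap : 0 < |a|^p := Real.rpow_pos_of_pos (abs_pos.2 ha) p
    have step1 : ∀ x, M (a • v) ≤ |a|^p * T v x := fun x => by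
      rw [← key x]; exact hMle _ _
    have : M (a • v) / |a|^p ≤ M v := by
      apply hMge
      intro x
      rw [div_le_iff₀ hap, mul_comm]
      exact step1 x
    calc M (a • v) = |a|^p * (M (a • v) / |a|^p) := by field_simp
      _ ≤ |a|^p * M v := mul_le_mul_of_nonneg_left this hap.le
  have hMsmul : ∀ (a : ℝ) (v), M (a • v) = |a|^p * M v := by
    intro a v
    rcases eq_or_ne a 0 with rfl | ha
    · simp [hMzero, Real.zero_rpow hp0.ne']
    · refine le_antisymm (hMsmul_le a ha v) ?_
      have h2 := hMsmul_le a⁻¹ (inv_ne_zero ha) (a • v)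
      rw [inv_smul_smul₀ ha] at h2
      have e : |a|^p * |a⁻¹|^p = 1 := by
        rw [← Real.mul_rpow (abs_nonneg _) (abs_nonneg _), abs_inv,
          mul_inv_cancel₀ (abs_ne_zero.2 ha), Real.one_rpow]
      have hpos : (0:ℝ) < |a|^p := Real.rpow_pos_of_pos (abs_pos.2 ha) p
      calc |a|^p * M v ≤ |a|^p * (|a⁻¹|^p * M (a • v)) :=
            mul_le_mul_of_nonneg_left h2 hpos.le
        _ = (|a|^p * |a⁻¹|^p) * M (a • v) := by ring
        _ = M (a • v) := by rw [e, one_mul]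
  -- the two isometric embeddings
  have hj1 : ∀ b : ↥B, M (b, 0) = NS.phi ↑b := by
    intro b
    refine le_antisymm ?_ (hMge _ _ ?_)
    · refine le_trans (hMle (b, 0) 0) ?_
      simp only [hT]
      simp [NS.phi_zero hp0, NG.phi_zero hp0]
    · intro x
      simp only [hT]
      have t1 : NS.phi ↑b ≤ NS.phi ((b : S.carrier) - ↑x) + NS.phi ↑x := by
        have := NS.phi_add_le ((b : S.carrier) - ↑x) ↑x; simpa using this
      have t2 : (1 - K) * NS.phi ↑x ≤ NG.phi (f x) := by
        have := hfl x
        have h3 : (1 - K) * NS.phi ↑x ≤ (1-ε)^p * NS.phi ↑x :=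
          mul_le_mul_of_nonneg_right (by linarith) (NS.phi_nonneg _)
        linarith
      have t0 : (0:↥A) + x = x := zero_add x
      rw [t0]
      nlinarith [NS.phi_nonneg (↑x : S.carrier)]
  have hj2 : ∀ a : ↥A, M (0, a) = NG.phi (f a) := by
    intro a
    refine le_antisymm ?_ (hMge _ _ ?_)
    · refine le_trans (hMle (0, a) 0) ?_
      simp only [hT]
      simp [NS.phi_zero hp0, NG.phi_zero hp0]
    · intro x
      simp only [hT]
      have e0 : ((0:↥B) : S.carrier) - ↑x = -↑x := by simp
      rw [e0, NS.phi_neg hp0]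
      have t1 : NG.phi (f a) ≤ NG.phi (f (a + x)) + NG.phi (f x) := by
        have h := NG.phi_add_le (f (a + x)) (- f x)
        rw [NG.phi_neg hp0] at h
        have e : f (a + x) + - f x = f a := by
          rw [← map_neg, ← map_add]; congr 1; abel
        rw [e] at h; exact h
      have t2 : NG.phi (f x) ≤ (1 + K) * NS.phi ↑x := by
        have := hfu x
        have : (1+ε)^p * NS.phi ↑x ≤ (1 + K) * NS.phi ↑x :=
          mul_le_mul_of_nonneg_right hK1b (NS.phi_nonneg _)
        linarith [hfu x]
      have t0 : (0:↥A) + a = a := zero_add a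
      nlinarith [NS.phi_nonneg (↑x : S.carrier)]
  have hident : ∀ a : ↥A, M (⟨↑a, hAB a.2⟩, -a) ≤ K * NS.phi ↑a := by
    intro a
    refine le_trans (hMle _ a) ?_
    simp only [hT]
    have e1 : ((⟨↑a, hAB a.2⟩ : ↥B) : S.carrier) - ↑a = 0 := by simp
    have e2 : -a + a = (0 : ↥A) := by abel
    rw [e1, e2, map_zero, NS.phi_zero hp0, NG.phi_zero hp0]
    simp
  -- kernel
  have hker : ∀ v, M v = 0 → v = 0 := by
    intro v hv
    have lower1 : (1-ε)^p * NS.phi ((v.1 : S.carrier) + ↑v.2) ≤ M v := by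
      apply hMge
      intro x
      simp only [hT]
      have t1 : (1-ε)^p * NS.phi (↑(v.2 + x) : S.carrier) ≤ NG.phi (f (v.2 + x)) := hfl _
      have t2 : NS.phi ((v.1 : S.carrier) + ↑v.2) ≤
          NS.phi ((v.1 : S.carrier) - ↑x) + NS.phi (↑(v.2 + x) : S.carrier) := by
        have h := NS.phi_add_le ((v.1 : S.carrier) - ↑x) (↑(v.2 + x) : S.carrier)
        have e : ((v.1 : S.carrier) - ↑x) + (↑(v.2 + x) : S.carrier) =
            (v.1 : S.carrier) + ↑v.2 := by push_cast; abel
        rwa [e] at h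
      have hppos : (0:ℝ) < (1-ε)^p := Real.rpow_pos_of_pos (by linarith) p
      nlinarith [NS.phi_nonneg ((v.1 : S.carrier) - ↑x), hK0.le,
        NS.phi_nonneg (↑x : S.carrier), NS.phi_nonneg (↑(v.2+x) : S.carrier)]
    have lower2 : min K ((1-ε)^p) * NS.phi (↑v.2 : S.carrier) ≤ M v := by
      apply hMge
      intro x
      simp only [hT]
      have t1 : (1-ε)^p * NS.phi (↑(v.2 + x) : S.carrier) ≤ NG.phi (f (v.2 + x)) := hfl _
      have t2 : NS.phi (↑v.2 : S.carrier) ≤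
          NS.phi (↑(v.2 + x) : S.carrier) + NS.phi (↑x : S.carrier) := by
        have h := NS.phi_add_le (↑(v.2 + x) : S.carrier) (-(↑x : S.carrier))
        rw [NS.phi_neg hp0] at h
        have e : (↑(v.2 + x) : S.carrier) + -(↑x : S.carrier) = ↑v.2 := by push_cast; abel
        rwa [e] at h
      have hm1 : min K ((1-ε)^p) ≤ K := min_le_left _ _
      have hm2 : min K ((1-ε)^p) ≤ (1-ε)^p := min_le_right _ _
      have hmpos : 0 < min K ((1-ε)^p) :=
        lt_min hK0 (Real.rpow_pos_of_pos (by linarith) p)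
      nlinarith [NS.phi_nonneg ((v.1 : S.carrier) - ↑x),
        NS.phi_nonneg (↑x : S.carrier), NS.phi_nonneg (↑(v.2+x) : S.carrier),
        NS.phi_nonneg (↑(v.2) : S.carrier)]
    have hmpos : 0 < min K ((1-ε)^p) := lt_min hK0 (Real.rpow_pos_of_pos (by linarith) p)
    have h2 : NS.phi (↑v.2 : S.carrier) = 0 := by
      have hnn := NS.phi_nonneg (↑v.2 : S.carrier)
      nlinarith [lower2, hv.symm ▸ lower2]
    have hv2 : v.2 = 0 := by
      have := (NS.phi_eq_zero_iff hp0 _).1 h2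
      exact Subtype.ext (by exact_mod_cast this)
    have h1 : NS.phi ((v.1 : S.carrier) + ↑v.2) = 0 := by
      have hppos : (0:ℝ) < (1-ε)^p := Real.rpow_pos_of_pos (by linarith) p
      have hnn := NS.phi_nonneg ((v.1 : S.carrier) + ↑v.2)
      nlinarith [lower1]
    have hv1 : v.1 = 0 := by
      rw [hv2] at h1
      simp only [ZeroMemClass.coe_zero, add_zero] at h1
      have := (NS.phi_eq_zero_iff hp0 _).1 h1
      exact Subtype.ext this
    exact Prod.ext hv1 hv2
  have hMz : ∀ v, M v = 0 ↔ v = 0 := fun v => ⟨hker v, fun h => h ▸ hMzero⟩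
  -- the p-norm on the amalgam
  set NZ : PNorm p (↥B × ↥A) := mkPNorm hp0 M hM0 hMz hMsmul hMadd with hNZ
  have hNZpow : ∀ v, NZ.N v ^ p = M v := fun v => mkPNorm_pow hp0 M hM0 hMz hMsmul hMadd v
  haveI : FiniteDimensional ℝ ↥A := Submodule.finiteDimensional_of_le hAB
  set Z : PBanach p := { carrier := ↥B × ↥A, pnorm := NZ,
                         complete := findim_isCompleteP hp0 hp1 NZ } with hZ
  -- the isometry from the range of f
  have hinj : Function.Injective f := by
    intro a a' haa
    have h0 : f (a - a') = 0 := by rw [map_sub, haa, sub_self]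
    have h1 : NG.phi (f (a - a')) = 0 := by rw [h0]; exact NG.phi_zero hp0
    have h2 := hfl (a - a')
    have hppos : (0:ℝ) < (1-ε)^p := Real.rpow_pos_of_pos (by linarith) p
    have h3 : NS.phi (↑(a - a') : S.carrier) = 0 := by
      have hnn := NS.phi_nonneg (↑(a - a') : S.carrier)
      nlinarith
    have h4 := (NS.phi_eq_zero_iff hp0 _).1 h3
    have : a - a' = 0 := Subtype.ext (by exact_mod_cast h4)
    exact sub_eq_zero.1 this
  set eq := LinearEquiv.ofInjective f hinj with heq
  set g : ↥(LinearMap.range f) →ₗ[ℝ] ↥B × ↥A :=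
    (LinearMap.inr ℝ ↥B ↥A).comp eq.symm.toLinearMap with hg
  have hgapp : ∀ u : ↥(LinearMap.range f), f (eq.symm u) = ↑u := by
    intro u
    have := eq.apply_symm_apply u
    have h2 : ((eq (eq.symm u)) : G.carrier) = ↑u := by rw [this]
    rwa [LinearEquiv.ofInjective_apply] at h2
  have hgiso : ∀ u : ↥(LinearMap.range f), NZ.N (g u) = NG.N ↑u := by
    intro u
    have h1 : NZ.N (g u) ^ p = NG.N ↑u ^ p := by
      rw [hNZpow]
      show M (0, eq.symm u) = _
      rw [hj2, hgapp u]
      rfl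
    exact rpow_base_inj hp0 (NZ.nonneg _) (NG.nonneg _) h1
  obtain ⟨h, hhiso, hhg⟩ := hGaud δ hδ0 Z (by
      show FiniteDimensional ℝ (↥B × ↥A); infer_instance)
    (LinearMap.range f) g hgiso
  -- the extension
  refine ⟨h.comp (LinearMap.inl ℝ ↥B ↥A), ?_, ?_⟩
  · intro b
    have hNb : NZ.N (b, (0:↥A)) = NS.N ↑b := by
      apply rpow_base_inj hp0 (NZ.nonneg _) (NS.nonneg _)
      rw [hNZpow]
      show M (b, 0) = _
      rw [hj1]
      rfl
    have := hhiso (b, (0:↥A))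
    rw [hNb] at this
    exact this
  · intro a
    set b₀ : ↥B := ⟨↑a, hAB a.2⟩ with hb₀
    have hfa : h (0, a) = f a := by
      have hmem : f a ∈ LinearMap.range f := LinearMap.mem_range_self f a
      have h1 := hhg ⟨f a, hmem⟩
      have h2 : eq.symm ⟨f a, hmem⟩ = a := by
        rw [LinearEquiv.symm_apply_eq]
        exact Subtype.ext (LinearEquiv.ofInjective_apply f a).symm
      have h3 : g ⟨f a, hmem⟩ = ((0 : ↥B), a) := by
        show ((0 : ↥B), eq.symm ⟨f a, hmem⟩) = _
        rw [h2]
      rw [h3] at h1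
      exact h1
    have hdiff : h.comp (LinearMap.inl ℝ ↥B ↥A) b₀ - f a = h (b₀, -a) := by
      show h (b₀, 0) - f a = _
      rw [← hfa, ← map_sub]
      congr 1
      show (b₀ - 0, 0 - a) = (b₀, -a)
      simp
    rw [hdiff]
    have hbound := (hhiso (b₀, -a)).2
    have hphi : NG.phi (h (b₀, -a)) ≤ (1+δ)^p * NZ.phi (b₀, -a) :=
      phi_bounds hp0 Z.pnorm NG (by linarith) hbound
    have hZphi : NZ.phi (b₀, -a) = M (b₀, -a) := hNZpow _
    have hMa : M (b₀, -a) ≤ K * NS.phi ↑a := hident a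
    have h2δ : (1+δ)^p ≤ 2 := le_trans (one_add_rpow_le hp0 hp1 hδ0.le) (by linarith)
    have hMnn := hM0 (b₀, -a)
    have hphinn := NS.phi_nonneg (↑a : S.carrier)
    calc NG.phi (h (b₀, -a)) ≤ (1+δ)^p * NZ.phi (b₀, -a) := hphi
      _ = (1+δ)^p * M (b₀, -a) := by rw [hZphi]
      _ ≤ 2 * (K * NS.phi ↑a) := by
          nlinarith [Real.rpow_pos_of_pos (show (0:ℝ) < 1+δ by linarith) p]
      _ ≤ 8 * ε * NS.phi ↑a := by nlinarith
end PGurarii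


namespace PGurarii

set_option maxHeartbeats 2000000 in
/-- a separable `p`-Banach space of almost universal disposition for
finite-dimensional `p`-Banach spaces contains an isometric copy of every separable
`p`-Banach space. -/
theorem statement2 (p : ℝ) (hp0 : 0 < p) (hp1 : p ≤ 1)
    (G : PBanach p) (hGsep : IsSeparableP p G.pnorm) (hGaud : AUD p G.carrier G.pnorm)
    (S : PBanach p) (hSsep : IsSeparableP p S.pnorm) :
    ∃ e : S.carrier →ₗ[ℝ] G.carrier, ∀ s : S.carrier, G.pnorm.N (e s) = S.pnorm.N s := by
  classical
  set NS := S.pnorm with hNSdef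
  set NG := G.pnorm with hNGdef
  -- a dense sequence in S
  obtain ⟨D, hDc, hDdense⟩ := hSsep
  have hDne : D.Nonempty := by
    obtain ⟨y, hy, -⟩ := hDdense 0 1 one_pos; exact ⟨y, hy⟩
  obtain ⟨sd, hsd⟩ := hDc.exists_eq_range hDne
  -- the chain of finite-dimensional subspaces
  set Sn : ℕ → Submodule ℝ S.carrier := fun n => Submodule.span ℝ (sd '' {i | i < n})
    with hSndef
  have hSnmono : ∀ {m n : ℕ}, m ≤ n → Sn m ≤ Sn n := by
    intro m n h
    exact Submodule.span_mono (Set.image_mono (fun i hi => lt_of_lt_of_le hi h))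
  have hSnfd : ∀ n, FiniteDimensional ℝ ↥(Sn n) :=
    fun n => FiniteDimensional.span_of_finite ℝ ((Set.finite_Iio n).image sd)
  have hdense : ∀ t : S.carrier, ∀ η : ℝ, 0 < η →
      ∃ m, ∃ v : S.carrier, v ∈ Sn m ∧ NS.phi (t - v) < η := by
    intro t η hη
    obtain ⟨y, hy, hlt⟩ := hDdense t η hη
    rw [hsd] at hy
    obtain ⟨i, rfl⟩ := hy
    exact ⟨i+1, sd i, Submodule.subset_span ⟨i, by simp, rfl⟩, hlt⟩
  -- numerics
  set dl : ℕ → ℝ := fun n => (2:ℝ)⁻¹ ^ (n+1) with hdl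
  have hpow0 : ∀ n : ℕ, (0:ℝ) < (2:ℝ)⁻¹ ^ n := fun n => by positivity
  have hpowle : ∀ {m n : ℕ}, m ≤ n → ((2:ℝ)⁻¹) ^ n ≤ ((2:ℝ)⁻¹) ^ m :=
    fun h => pow_le_pow_of_le_one (by norm_num) (by norm_num) h
  have hdl0 : ∀ n, 0 < dl n := fun n => hpow0 (n+1)
  have hdl1 : ∀ n, dl n < 1 := fun n =>
    lt_of_le_of_lt (hpowle (Nat.one_le_iff_ne_zero.2 (Nat.succ_ne_zero n))) (by norm_num)
  have hdlle : ∀ n, dl n ≤ (2:ℝ)⁻¹ ^ n := fun n => hpowle (Nat.le_succ n)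
  have hpowsmall : ∀ ε : ℝ, 0 < ε → ∃ k : ℕ, ((2:ℝ)⁻¹) ^ k < ε := by
    intro ε hε
    exact exists_pow_lt_of_lt_one hε (by norm_num)
  -- bound property at each level
  set P : ∀ n : ℕ, (↥(Sn n) →ₗ[ℝ] G.carrier) → Prop := fun n f =>
    ∀ v : ↥(Sn n), (1 - dl n) * NS.N ↑v ≤ NG.N (f v) ∧ NG.N (f v) ≤ (1 + dl n) * NS.N ↑v
    with hP
  have hSn0 : ∀ v : ↥(Sn 0), (v : S.carrier) = 0 := by
    intro v
    have h0 : Sn 0 = ⊥ := by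
      rw [hSndef]
      have : {i : ℕ | i < 0} = (∅ : Set ℕ) := by
        ext i; simp
      simp [this]
    have h0le : Sn 0 ≤ ⊥ := le_of_eq h0
    simpa using h0le v.2
  have base : P 0 0 := by
    intro v
    have h1 : NS.N ↑v = 0 := by rw [hSn0 v]; exact NS.N_zero
    have h2 : NG.N ((0 : ↥(Sn 0) →ₗ[ℝ] G.carrier) v) = 0 := by
      simp only [LinearMap.zero_apply]; exact NG.N_zero
    rw [h1, h2]
    norm_num
  -- the recursive construction
  have hrec : ∀ n (f : ↥(Sn n) →ₗ[ℝ] G.carrier), P n f →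
      ∃ f' : ↥(Sn (n+1)) →ₗ[ℝ] G.carrier, P (n+1) f' ∧
        ∀ v : ↥(Sn n), NG.phi (f' ⟨↑v, hSnmono (Nat.le_succ n) v.2⟩ - f v) ≤
          8 * dl n * NS.phi ↑v := by
    intro n f hfP
    obtain ⟨f', h1, h2⟩ := step_lemma p hp0 hp1 G hGaud S (Sn n) (Sn (n+1))
      (hSnmono (Nat.le_succ n)) (hSnfd (n+1)) (hdl0 n) (hdl1 n) (hdl0 (n+1)) (hdl1 (n+1))
      f hfP
    exact ⟨f', h1, h2⟩
  choose stepF hstep1 hstep2 using hrec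
  set F0 : ∀ n, {f : ↥(Sn n) →ₗ[ℝ] G.carrier // P n f} :=
    fun n => Nat.rec ⟨0, base⟩ (fun k ih => ⟨stepF k ih.1 ih.2, hstep1 k ih.1 ih.2⟩) n
    with hF0
  set F : ∀ n, ↥(Sn n) →ₗ[ℝ] G.carrier := fun n => (F0 n).1 with hF
  have hFP : ∀ n, P n (F n) := fun n => (F0 n).2
  have hFstep : ∀ n (v : ↥(Sn n)),
      NG.phi (F (n+1) ⟨↑v, hSnmono (Nat.le_succ n) v.2⟩ - F n v) ≤
        8 * dl n * NS.phi ↑v := by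
    intro n v
    have : F (n+1) = stepF n (F n) (hFP n) := rfl
    rw [this]
    exact hstep2 n (F n) (hFP n) v
  -- phi-form bounds
  have hFu : ∀ n (v : ↥(Sn n)), NG.phi (F n v) ≤ (1 + dl n)^p * NS.phi ↑v := fun n v =>
    phi_bounds hp0 NS NG (by linarith [hdl0 n]) (hFP n v).2
  have hFl : ∀ n (v : ↥(Sn n)), (1 - dl n)^p * NS.phi ↑v ≤ NG.phi (F n v) := by
    intro n v
    have h := (hFP n v).1
    have h2 := Real.rpow_le_rpow (mul_nonneg (by linarith [hdl1 n]) (NS.nonneg _)) h hp0.le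
    rwa [Real.mul_rpow (by linarith [hdl1 n]) (NS.nonneg _)] at h2
  have hFu2 : ∀ n (v : ↥(Sn n)), NG.phi (F n v) ≤ 2 * NS.phi ↑v := by
    intro n v
    refine le_trans (hFu n v) (mul_le_mul_of_nonneg_right ?_ (NS.phi_nonneg _))
    refine le_trans (one_add_rpow_le hp0 hp1 (hdl0 n).le) ?_
    linarith [hdl1 n]
  have hFd : ∀ n (v w : ↥(Sn n)), NG.phi (F n v - F n w) ≤ 2 * NS.phi (↑v - ↑w) := by
    intro n v w
    have h1 : F n v - F n w = F n (v - w) := (map_sub (F n) v w).symm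
    have h2 : ((v - w : ↥(Sn n)) : S.carrier) = ↑v - ↑w := rfl
    rw [h1, ← h2]
    exact hFu2 n (v - w)
  -- the tail estimate
  have hTail : ∀ n m (h : n ≤ m) (v : ↥(Sn n)),
      NG.phi (F m ⟨↑v, hSnmono h v.2⟩ - F n v) ≤
        8 * ((2:ℝ)⁻¹^n - (2:ℝ)⁻¹^m) * NS.phi ↑v := by
    intro n m h v
    induction m, h using Nat.le_induction with
    | base =>
        have : (⟨↑v, hSnmono (le_refl n) v.2⟩ : ↥(Sn n)) = v := Subtype.ext rfl
        rw [this, sub_self, NG.phi_zero hp0]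
        simp
    | succ m hm ih =>
        set w : ↥(Sn m) := ⟨↑v, hSnmono hm v.2⟩ with hw
        have hlift : (⟨↑v, hSnmono (le_trans hm (Nat.le_succ m)) v.2⟩ : ↥(Sn (m+1))) =
            ⟨↑w, hSnmono (Nat.le_succ m) w.2⟩ := Subtype.ext rfl
        have key : NG.phi (F (m+1) ⟨↑v, hSnmono (le_trans hm (Nat.le_succ m)) v.2⟩ - F n v) ≤
            NG.phi (F (m+1) ⟨↑w, hSnmono (Nat.le_succ m) w.2⟩ - F m w) +
            NG.phi (F m w - F n v) := by
          rw [hlift]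
          exact NG.phi_sub_le hp0 _ (F m w) _
        have t1 := hFstep m w
        have t2 : NS.phi (↑w : S.carrier) = NS.phi ↑v := rfl
        rw [t2] at t1
        have t3 : NG.phi (F m w - F n v) ≤ 8 * ((2:ℝ)⁻¹^n - (2:ℝ)⁻¹^m) * NS.phi ↑v := ih
        have e : 8 * dl m + 8 * ((2:ℝ)⁻¹^n - (2:ℝ)⁻¹^m) =
            8 * ((2:ℝ)⁻¹^n - (2:ℝ)⁻¹^(m+1)) := by
          rw [hdl]
          have : ((2:ℝ)⁻¹)^(m+1) = (2:ℝ)⁻¹^m * 2⁻¹ := pow_succ _ _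
          rw [this]; ring
        have := add_le_add t1 t3
        refine le_trans key (le_trans this (le_of_eq ?_))
        rw [← e]; ring
  have hTail' : ∀ n m (h : n ≤ m) (v : ↥(Sn n)),
      NG.phi (F m ⟨↑v, hSnmono h v.2⟩ - F n v) ≤ 8 * (2:ℝ)⁻¹^n * NS.phi ↑v := by
    intro n m h v
    refine le_trans (hTail n m h v) ?_
    have := hpow0 m
    have := NS.phi_nonneg (↑v : S.carrier)
    nlinarith
  -- bridging estimate between any two levels
  have hbridge : ∀ (n₁ n₂ : ℕ) (v₁ : ↥(Sn n₁)) (v₂ : ↥(Sn n₂)),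
      NG.phi (F n₁ v₁ - F n₂ v₂) ≤
        8 * (2:ℝ)⁻¹^n₁ * NS.phi ↑v₁ + 8 * (2:ℝ)⁻¹^n₂ * NS.phi ↑v₂ +
          2 * NS.phi (↑v₁ - ↑v₂) := by
    intro n₁ n₂ v₁ v₂
    set m := max n₁ n₂ with hm
    have h₁ : n₁ ≤ m := le_max_left _ _
    have h₂ : n₂ ≤ m := le_max_right _ _
    set l₁ : ↥(Sn m) := ⟨↑v₁, hSnmono h₁ v₁.2⟩ with hl₁
    set l₂ : ↥(Sn m) := ⟨↑v₂, hSnmono h₂ v₂.2⟩ with hl₂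
    have t1 : NG.phi (F n₁ v₁ - F m l₁) ≤ 8 * (2:ℝ)⁻¹^n₁ * NS.phi ↑v₁ := by
      rw [NG.phi_sub_comm hp0]
      exact hTail' n₁ m h₁ v₁
    have t2 : NG.phi (F m l₁ - F m l₂) ≤ 2 * NS.phi ((v₁ : S.carrier) - ↑v₂) :=
      hFd m l₁ l₂
    have t3 : NG.phi (F m l₂ - F n₂ v₂) ≤ 8 * (2:ℝ)⁻¹^n₂ * NS.phi ↑v₂ :=
      hTail' n₂ m h₂ v₂
    have a1 := NG.phi_sub_le hp0 (F n₁ v₁) (F m l₁) (F n₂ v₂)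
    have a2 := NG.phi_sub_le hp0 (F m l₁) (F m l₂) (F n₂ v₂)
    linarith
  have happ_bound : ∀ t v : S.carrier, NS.phi v ≤ NS.phi t + NS.phi (t - v) := by
    intro t v
    have h := NS.phi_add_le t (v - t)
    have e : t + (v - t) = v := by abel
    rw [e] at h
    have h2 : NS.phi (v - t) = NS.phi (t - v) := NS.phi_sub_comm hp0 v t
    linarith
  -- the limit predicate
  set Lim : S.carrier → G.carrier → Prop := fun t x =>
    ∀ ε : ℝ, 0 < ε → ∃ η : ℝ, 0 < η ∧ ∃ n₀ : ℕ, ∀ n, n₀ ≤ n →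
      ∀ (v : S.carrier) (hv : v ∈ Sn n), NS.phi (t - v) < η →
        NG.phi (F n ⟨v, hv⟩ - x) < ε with hLimdef
  -- existence of limits
  have lim_ex : ∀ t : S.carrier, ∃ x : G.carrier, Lim t x := by
    intro t
    have hsel : ∀ k : ℕ, ∃ n, ∃ (v : S.carrier) (_ : v ∈ Sn n),
        k ≤ n ∧ NS.phi (t - v) < (2:ℝ)⁻¹ ^ k := by
      intro k
      obtain ⟨m, v, hv, hlt⟩ := hdense t ((2:ℝ)⁻¹ ^ k) (hpow0 k)
      exact ⟨max m k, v, hSnmono (le_max_left m k) hv, le_max_right m k, hlt⟩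
    choose nk vk hvk hnk hak using hsel
    set u : ℕ → G.carrier := fun k => F (nk k) ⟨vk k, hvk k⟩ with hu
    set Ct : ℝ := NS.phi t + 1 with hCt
    have hCt0 : 0 < Ct := by have := NS.phi_nonneg t; rw [hCt]; linarith
    have hpk1 : ∀ k : ℕ, ((2:ℝ)⁻¹)^k ≤ 1 := by
      intro k
      calc ((2:ℝ)⁻¹)^k ≤ (2:ℝ)⁻¹^0 := hpowle (Nat.zero_le k)
        _ = 1 := pow_zero _
    have hvkb : ∀ k, NS.phi (vk k) ≤ Ct := by
      intro k
      have h1 := happ_bound t (vk k)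
      have h2 : NS.phi (t - vk k) < (2:ℝ)⁻¹^k := hak k
      have h3 := hpk1 k
      rw [hCt]; linarith
    have hucau : ∀ k l : ℕ, NG.phi (u k - u l) ≤
        (8*Ct + 2) * ((2:ℝ)⁻¹^k + (2:ℝ)⁻¹^l) := by
      intro k l
      have hb := hbridge (nk k) (nk l) ⟨vk k, hvk k⟩ ⟨vk l, hvk l⟩
      have e1 : (2:ℝ)⁻¹ ^ (nk k) ≤ (2:ℝ)⁻¹ ^ k := hpowle (hnk k)
      have e2 : (2:ℝ)⁻¹ ^ (nk l) ≤ (2:ℝ)⁻¹ ^ l := hpowle (hnk l)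
      have e3 : NS.phi ((vk k : S.carrier) - vk l) ≤ (2:ℝ)⁻¹^k + (2:ℝ)⁻¹^l := by
        have h := NS.phi_sub_le hp0 (vk k) t (vk l)
        have h2 : NS.phi (vk k - t) = NS.phi (t - vk k) := NS.phi_sub_comm hp0 _ _
        linarith [hak k, hak l]
      have b1 : 8 * (2:ℝ)⁻¹^(nk k) * NS.phi (vk k) ≤ 8 * (2:ℝ)⁻¹^k * Ct := by
        nlinarith [hpow0 (nk k), NS.phi_nonneg (vk k), hvkb k, hpow0 k]
      have b2 : 8 * (2:ℝ)⁻¹^(nk l) * NS.phi (vk l) ≤ 8 * (2:ℝ)⁻¹^l * Ct := by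
        nlinarith [hpow0 (nk l), NS.phi_nonneg (vk l), hvkb l, hpow0 l]
      nlinarith [hpow0 k, hpow0 l]
    have hcauchy : ∀ ε : ℝ, 0 < ε → ∃ n₀ : ℕ, ∀ m, n₀ ≤ m → ∀ n, n₀ ≤ n →
        NG.phi (u m - u n) < ε := by
      intro ε hε
      obtain ⟨k₀, hk₀⟩ := hpowsmall (ε / (2*(8*Ct+2))) (by positivity)
      refine ⟨k₀, fun m hm n hn => ?_⟩
      have h := hucau m n
      have e1 : (2:ℝ)⁻¹^m ≤ (2:ℝ)⁻¹^k₀ := hpowle hm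
      have e2 : (2:ℝ)⁻¹^n ≤ (2:ℝ)⁻¹^k₀ := hpowle hn
      have hc2 : (0:ℝ) < 2*(8*Ct+2) := by linarith
      have hk₀' : (2:ℝ)⁻¹^k₀ * (2*(8*Ct+2)) < ε := (lt_div_iff₀ hc2).1 hk₀
      have hsum : (2:ℝ)⁻¹^m + (2:ℝ)⁻¹^n ≤ 2 * (2:ℝ)⁻¹^k₀ := by linarith
      have h2 : (8*Ct+2) * ((2:ℝ)⁻¹^m + (2:ℝ)⁻¹^n) ≤ (8*Ct+2) * (2*(2:ℝ)⁻¹^k₀) :=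
        mul_le_mul_of_nonneg_left hsum (by linarith)
      have h3 : (8*Ct+2) * (2*(2:ℝ)⁻¹^k₀) = (2:ℝ)⁻¹^k₀ * (2*(8*Ct+2)) := by ring
      linarith
    obtain ⟨x, hx⟩ := G.complete u (by
      intro ε hε
      obtain ⟨n₀, h⟩ := hcauchy ε hε
      exact ⟨n₀, fun m hm n hn => h m hm n hn⟩)
    refine ⟨x, ?_⟩
    intro ε hε
    obtain ⟨k₁, hk₁⟩ := hx (ε/4) (by linarith)
    obtain ⟨k₂, hk₂⟩ := hpowsmall (ε/(4*(8*Ct+2))) (by positivity)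
    obtain ⟨k₃, hk₃⟩ := hpowsmall (ε/(32*Ct)) (by positivity)
    set k := max k₁ k₂ with hk
    refine ⟨min 1 (ε/16), by positivity, k₃, ?_⟩
    intro n hn v hv hlt
    have hacc1 : NS.phi (t - v) < 1 := lt_of_lt_of_le hlt (min_le_left _ _)
    have hacc2 : NS.phi (t - v) < ε/16 := lt_of_lt_of_le hlt (min_le_right _ _)
    have hvb : NS.phi v ≤ Ct := by
      have := happ_bound t v; rw [hCt]; linarith
    have hb := hbridge n (nk k) ⟨v, hv⟩ ⟨vk k, hvk k⟩
    have e1 : (2:ℝ)⁻¹ ^ (nk k) ≤ (2:ℝ)⁻¹ ^ k := hpowle (hnk k)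
    have e2 : (2:ℝ)⁻¹ ^ k ≤ (2:ℝ)⁻¹ ^ k₂ := hpowle (le_max_right k₁ k₂)
    have e3 : (2:ℝ)⁻¹ ^ n ≤ (2:ℝ)⁻¹ ^ k₃ := hpowle hn
    have e4 : NS.phi (v - vk k) ≤ ε/16 + (2:ℝ)⁻¹^k := by
      have h := NS.phi_sub_le hp0 v t (vk k)
      have h2 : NS.phi (v - t) = NS.phi (t - v) := NS.phi_sub_comm hp0 v t
      linarith [hak k]
    have hxk : NG.phi (u k - x) < ε/4 := hk₁ k (le_max_left k₁ k₂)
    have b1 : 8 * (2:ℝ)⁻¹^n * NS.phi v ≤ 8 * (2:ℝ)⁻¹^k₃ * Ct := by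
      nlinarith [hpow0 n, NS.phi_nonneg v, hpow0 k₃]
    have b1' : 8 * (2:ℝ)⁻¹^k₃ * Ct < ε/4 := by
      have h' : (2:ℝ)⁻¹^k₃ * (32*Ct) < ε := (lt_div_iff₀ (by positivity)).1 hk₃
      linarith
    have b2 : 8 * (2:ℝ)⁻¹^(nk k) * NS.phi (vk k) ≤ 8 * (2:ℝ)⁻¹^k₂ * Ct := by
      nlinarith [hpow0 (nk k), NS.phi_nonneg (vk k), hvkb k, hpow0 k₂]
    have b2' : 8 * (2:ℝ)⁻¹^k₂ * Ct + 2 * (2:ℝ)⁻¹^k₂ < ε/4 := by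
      have h' : (2:ℝ)⁻¹^k₂ * (4*(8*Ct+2)) < ε := (lt_div_iff₀ (by positivity)).1 hk₂
      nlinarith
    have b3 : 2 * NS.phi (v - vk k) ≤ ε/8 + 2 * (2:ℝ)⁻¹^k₂ := by
      have : (2:ℝ)⁻¹^k ≤ (2:ℝ)⁻¹^k₂ := e2
      linarith [e4]
    have htri := NG.phi_sub_le hp0 (F n ⟨v, hv⟩) (u k) x
    have hbu : NG.phi (F n ⟨v, hv⟩ - u k) ≤
        8 * (2:ℝ)⁻¹^n * NS.phi v + 8 * (2:ℝ)⁻¹^(nk k) * NS.phi (vk k) +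
          2 * NS.phi (v - vk k) := hb
    linarith
  -- uniqueness of limits
  have lim_unique : ∀ t x x', Lim t x → Lim t x' → x = x' := by
    intro t x x' h1 h2
    have key : ∀ ε : ℝ, 0 < ε → NG.phi (x - x') < ε := by
      intro ε hε
      obtain ⟨η₁, hη₁, n₁, hh₁⟩ := h1 (ε/2) (by linarith)
      obtain ⟨η₂, hη₂, n₂, hh₂⟩ := h2 (ε/2) (by linarith)
      obtain ⟨m, v, hv, hlt⟩ := hdense t (min η₁ η₂) (lt_min hη₁ hη₂)
      set n := max m (max n₁ n₂) with hn
      have hvn : v ∈ Sn n := hSnmono (le_max_left _ _) hv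
      have a1 := hh₁ n (le_trans (le_trans (le_max_left n₁ n₂) (le_max_right m _)) (le_refl n))
        v hvn (lt_of_lt_of_le hlt (min_le_left _ _))
      have a2 := hh₂ n (le_trans (le_trans (le_max_right n₁ n₂) (le_max_right m _)) (le_refl n))
        v hvn (lt_of_lt_of_le hlt (min_le_right _ _))
      have htri := NG.phi_sub_le hp0 x (F n ⟨v, hvn⟩) x'
      have e := NG.phi_sub_comm hp0 x (F n ⟨v, hvn⟩)
      linarith
    have h0 : NG.phi (x - x') = 0 := by
      rcases lt_or_ge 0 (NG.phi (x - x')) with h | h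
      · exact absurd (key _ h) (lt_irrefl _)
      · exact le_antisymm h (NG.phi_nonneg _)
    exact sub_eq_zero.1 ((NG.phi_eq_zero_iff hp0 _).1 h0)
  -- additivity of limits
  have lim_add : ∀ t u' x y, Lim t x → Lim u' y → Lim (t + u') (x + y) := by
    intro t u' x y h1 h2 ε hε
    obtain ⟨η₁, hη₁, n₁, hh₁⟩ := h1 (ε/4) (by linarith)
    obtain ⟨η₂, hη₂, n₂, hh₂⟩ := h2 (ε/4) (by linarith)
    obtain ⟨m₁, v₁, hv₁, hl₁⟩ := hdense t (min (min η₁ η₂) (ε/32))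
      (by refine lt_min (lt_min hη₁ hη₂) (by linarith))
    obtain ⟨m₂, v₂, hv₂, hl₂⟩ := hdense u' (min (min η₁ η₂) (ε/32))
      (by refine lt_min (lt_min hη₁ hη₂) (by linarith))
    refine ⟨ε/32, by linarith, max (max n₁ n₂) (max m₁ m₂), ?_⟩
    intro n hn w hw hlt
    have hn₁ : n₁ ≤ n := le_trans (le_trans (le_max_left n₁ n₂) (le_max_left _ _)) hn
    have hn₂ : n₂ ≤ n := le_trans (le_trans (le_max_right n₁ n₂) (le_max_left _ _)) hn
    have hm₁ : m₁ ≤ n := le_trans (le_trans (le_max_left m₁ m₂) (le_max_right _ _)) hn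
    have hm₂ : m₂ ≤ n := le_trans (le_trans (le_max_right m₁ m₂) (le_max_right _ _)) hn
    have hv₁n : v₁ ∈ Sn n := hSnmono hm₁ hv₁
    have hv₂n : v₂ ∈ Sn n := hSnmono hm₂ hv₂
    have a1 := hh₁ n hn₁ v₁ hv₁n
      (lt_of_lt_of_le hl₁ (le_trans (min_le_left _ _) (min_le_left _ _)))
    have a2 := hh₂ n hn₂ v₂ hv₂n
      (lt_of_lt_of_le hl₂ (le_trans (min_le_left _ _) (min_le_right _ _)))
    have hl₁' : NS.phi (t - v₁) < ε/32 := lt_of_lt_of_le hl₁ (min_le_right _ _)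
    have hl₂' : NS.phi (u' - v₂) < ε/32 := lt_of_lt_of_le hl₂ (min_le_right _ _)
    have hsplit : F n ⟨w, hw⟩ - (x + y) =
        (F n ⟨w, hw⟩ - F n ⟨v₁, hv₁n⟩ - F n ⟨v₂, hv₂n⟩) +
          ((F n ⟨v₁, hv₁n⟩ - x) + (F n ⟨v₂, hv₂n⟩ - y)) := by abel
    have htri : NG.phi (F n ⟨w, hw⟩ - (x + y)) ≤
        NG.phi (F n ⟨w, hw⟩ - F n ⟨v₁, hv₁n⟩ - F n ⟨v₂, hv₂n⟩) +
          (NG.phi (F n ⟨v₁, hv₁n⟩ - x) + NG.phi (F n ⟨v₂, hv₂n⟩ - y)) := by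
      rw [hsplit]
      have c1 := NG.phi_add_le (F n ⟨w, hw⟩ - F n ⟨v₁, hv₁n⟩ - F n ⟨v₂, hv₂n⟩)
        ((F n ⟨v₁, hv₁n⟩ - x) + (F n ⟨v₂, hv₂n⟩ - y))
      have c2 := NG.phi_add_le (F n ⟨v₁, hv₁n⟩ - x) (F n ⟨v₂, hv₂n⟩ - y)
      linarith
    have hlin : F n ⟨w, hw⟩ - F n ⟨v₁, hv₁n⟩ - F n ⟨v₂, hv₂n⟩ =
        F n (⟨w, hw⟩ - ⟨v₁, hv₁n⟩ - ⟨v₂, hv₂n⟩) := by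
      rw [map_sub, map_sub]
    have hcross : NG.phi (F n (⟨w, hw⟩ - ⟨v₁, hv₁n⟩ - ⟨v₂, hv₂n⟩)) ≤
        2 * NS.phi (w - v₁ - v₂) := hFu2 n _
    have hwv : NS.phi (w - v₁ - v₂) ≤
        NS.phi ((t + u') - w) + NS.phi (t - v₁) + NS.phi (u' - v₂) := by
      have c1 := NS.phi_add_le (-(t + u' - w)) ((t - v₁) + (u' - v₂))
      have c2 := NS.phi_add_le (t - v₁) (u' - v₂)
      have eneg := NS.phi_neg hp0 (t + u' - w)
      have e : -(t + u' - w) + ((t - v₁) + (u' - v₂)) = w - v₁ - v₂ := by abel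
      rw [e] at c1
      linarith
    rw [hlin] at htri
    linarith
  -- scalar multiples of limits
  have lim_smul : ∀ (c : ℝ) (t x), Lim t x → Lim (c • t) (c • x) := by
    intro c t x h
    rcases eq_or_ne c 0 with rfl | hc
    · have h00 : Lim (0 : S.carrier) (0 : G.carrier) := by
        intro ε hε
        refine ⟨ε/2, by linarith, 0, ?_⟩
        intro n _ v hv hlt
        have h1 : NG.phi (F n ⟨v, hv⟩ - 0) = NG.phi (F n ⟨v, hv⟩) := by rw [sub_zero]
        have h2 := hFu2 n ⟨v, hv⟩
        have h3 : NS.phi (0 - v) = NS.phi v := by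
          rw [zero_sub, NS.phi_neg hp0]
        rw [h1]
        rw [h3] at hlt
        linarith
      rw [zero_smul, zero_smul]
      exact h00
    · intro ε hε
      have hcp : 0 < |c|^p := Real.rpow_pos_of_pos (abs_pos.2 hc) p
      obtain ⟨η₁, hη₁, n₁, hh₁⟩ := h (ε / |c|^p) (by positivity)
      refine ⟨η₁ * |c|^p, by positivity, n₁, ?_⟩
      intro n hn w hw hlt
      have hvmem : c⁻¹ • w ∈ Sn n := Submodule.smul_mem _ _ hw
      have hacc : NS.phi (t - c⁻¹ • w) < η₁ := by
        have e : t - c⁻¹ • w = c⁻¹ • (c • t - w) := by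
          rw [smul_sub, inv_smul_smul₀ hc]
        rw [e, NS.phi_smul]
        have einv : |c⁻¹|^p = (|c|^p)⁻¹ := by
          rw [abs_inv, Real.inv_rpow (abs_nonneg c)]
        rw [einv]
        have hlt' : (|c|^p)⁻¹ * NS.phi (c • t - w) < (|c|^p)⁻¹ * (η₁ * |c|^p) := by
          apply mul_lt_mul_of_pos_left hlt (by positivity)
        calc (|c|^p)⁻¹ * NS.phi (c • t - w) < (|c|^p)⁻¹ * (η₁ * |c|^p) := hlt'
          _ = η₁ := by field_simp
      have hF' : F n ⟨w, hw⟩ = c • F n ⟨c⁻¹ • w, hvmem⟩ := by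
        have hsub : (⟨w, hw⟩ : ↥(Sn n)) = c • ⟨c⁻¹ • w, hvmem⟩ := by
          apply Subtype.ext
          show w = c • (c⁻¹ • w)
          rw [smul_inv_smul₀ hc]
        rw [hsub, map_smul]
      rw [hF', ← smul_sub, NG.phi_smul]
      have hmain := hh₁ n hn (c⁻¹ • w) hvmem hacc
      calc |c|^p * NG.phi (F n ⟨c⁻¹ • w, hvmem⟩ - x) < |c|^p * (ε / |c|^p) :=
            (mul_lt_mul_iff_right₀ hcp).2 hmain
        _ = ε := by field_simp
  -- limits are isometric
  have lim_iso : ∀ t x, Lim t x → NG.phi x = NS.phi t := by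
    intro t x h
    have key : ∀ ε : ℝ, 0 < ε → |NG.phi x - NS.phi t| < ε := by
      intro ε hε
      set Ct : ℝ := NS.phi t + 1 with hCt
      have hCt0 : 0 < Ct := by have := NS.phi_nonneg t; rw [hCt]; linarith
      obtain ⟨η, hη, n₁, hh⟩ := h (ε/4) (by linarith)
      obtain ⟨k, hk⟩ := hpowsmall (ε/(4*Ct)) (by positivity)
      obtain ⟨m, v, hv, hlt⟩ := hdense t (min (min η (ε/4)) 1)
        (by refine lt_min (lt_min hη (by linarith)) one_pos)
      set n := max m (max n₁ k) with hn
      have hvn : v ∈ Sn n := hSnmono (le_max_left _ _) hv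
      have hn₁ : n₁ ≤ n := le_trans (le_max_left n₁ k) (le_max_right m _)
      have hnk : k ≤ n := le_trans (le_max_right n₁ k) (le_max_right m _)
      have a1 : NG.phi (F n ⟨v, hvn⟩ - x) < ε/4 :=
        hh n hn₁ v hvn (lt_of_lt_of_le hlt (le_trans (min_le_left _ _) (min_le_left _ _)))
      have hlt4 : NS.phi (t - v) < ε/4 :=
        lt_of_lt_of_le hlt (le_trans (min_le_left _ _) (min_le_right _ _))
      have hlt1 : NS.phi (t - v) < 1 := lt_of_lt_of_le hlt (min_le_right _ _)
      have hvb : NS.phi v ≤ Ct := by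
        have := happ_bound t v; rw [hCt]; linarith
      have d1 : |NG.phi x - NG.phi (F n ⟨v, hvn⟩)| ≤ NG.phi (x - F n ⟨v, hvn⟩) :=
        NG.abs_phi_sub_phi hp0 _ _
      have d1' : NG.phi (x - F n ⟨v, hvn⟩) = NG.phi (F n ⟨v, hvn⟩ - x) :=
        NG.phi_sub_comm hp0 _ _
      have d3 : |NS.phi v - NS.phi t| ≤ NS.phi (v - t) := NS.abs_phi_sub_phi hp0 _ _
      have d3' : NS.phi (v - t) = NS.phi (t - v) := NS.phi_sub_comm hp0 _ _
      have u1 : NG.phi (F n ⟨v, hvn⟩) - NS.phi v ≤ dl n * NS.phi v := by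
        have hb := hFu n ⟨v, hvn⟩
        have h2 : (1 + dl n)^p ≤ 1 + dl n := one_add_rpow_le hp0 hp1 (hdl0 n).le
        nlinarith [NS.phi_nonneg v]
      have u2 : NS.phi v - NG.phi (F n ⟨v, hvn⟩) ≤ dl n * NS.phi v := by
        have hb := hFl n ⟨v, hvn⟩
        have h2 : 1 - dl n ≤ (1 - dl n)^p := one_sub_le_rpow hp0 hp1 (hdl0 n).le (hdl1 n).le
        nlinarith [NS.phi_nonneg v]
      have u3 : dl n * NS.phi v < ε/4 := by
        have e1 : dl n ≤ (2:ℝ)⁻¹^n := hdlle n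
        have e2 : (2:ℝ)⁻¹^n ≤ (2:ℝ)⁻¹^k := hpowle hnk
        have hX : dl n * NS.phi v ≤ (2:ℝ)⁻¹^k * Ct := by
          nlinarith [hdl0 n, NS.phi_nonneg v, hpow0 k]
        have h' : (2:ℝ)⁻¹^k * (4*Ct) < ε := (lt_div_iff₀ (by positivity)).1 hk
        linarith
      have d2 : |NG.phi (F n ⟨v, hvn⟩) - NS.phi v| < ε/4 := by
        rw [abs_lt]; constructor <;> linarith
      have tri1 : |NG.phi x - NS.phi t| ≤
          |NG.phi x - NG.phi (F n ⟨v, hvn⟩)| + |NG.phi (F n ⟨v, hvn⟩) - NS.phi v| +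
            |NS.phi v - NS.phi t| := by
        have c1 := abs_sub_le (NG.phi x) (NG.phi (F n ⟨v, hvn⟩)) (NS.phi t)
        have c2 := abs_sub_le (NG.phi (F n ⟨v, hvn⟩)) (NS.phi v) (NS.phi t)
        linarith
      have f1 : |NG.phi x - NG.phi (F n ⟨v, hvn⟩)| < ε/4 :=
        lt_of_le_of_lt (le_trans d1 (le_of_eq d1')) a1
      have f3 : |NS.phi v - NS.phi t| < ε/4 :=
        lt_of_le_of_lt d3 (by rw [d3']; exact hlt4)
      linarith
    have h0 : |NG.phi x - NS.phi t| = 0 := by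
      rcases lt_or_ge 0 (|NG.phi x - NS.phi t|) with hq | hq
      · exact absurd (key _ hq) (lt_irrefl _)
      · exact le_antisymm hq (abs_nonneg _)
    exact sub_eq_zero.1 (abs_eq_zero.1 h0)
  -- final assembly
  have lim_choose : ∀ t, Lim t (Classical.choose (lim_ex t)) :=
    fun t => Classical.choose_spec (lim_ex t)
  refine ⟨{ toFun := fun t => Classical.choose (lim_ex t)
            map_add' := fun t u' => lim_unique _ _ _ (lim_choose (t + u'))
              (lim_add _ _ _ _ (lim_choose t) (lim_choose u'))
            map_smul' := fun c t => lim_unique _ _ _ (lim_choose (c • t))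
              (lim_smul c _ _ (lim_choose t)) }, ?_⟩
  intro s
  have hiso := lim_iso s _ (lim_choose s)
  exact rpow_base_inj hp0 (NG.nonneg _) (NS.nonneg _) hiso


end PGurarii
end

section
/- Let p ∈ (0,1] and let U be a p-Banach space with the following property: for every ε > 0, every finite-dimensional p-Banach space Y, every subspace X of U and every isometry g : X → Y, there is an ε-isometry f : Y → U such that N(f (g x) − x) ≤ ε * N x for all x ∈ X. Then U is of almost universal disposition for finite-dimensional p-Banach spaces, i.e. the ε-isometry f can in fact be chosen with f (g x) = x for all x ∈ X. -/
namespace PGurarii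

open Filter Topology

private lemma PNorm.neg' {p : ℝ} {X : Type} [AddCommGroup X] [Module ℝ X] (NX : PNorm p X)
    (x : X) : NX.N (-x) = NX.N x := by
  rw [← neg_one_smul ℝ x, NX.smul_eq]; simp

private lemma exists_proj_bound (p : ℝ) (hp0 : 0 < p) (X : Type) [AddCommGroup X] [Module ℝ X]
    [FiniteDimensional ℝ X] (NX : PNorm p X) (T : X →ₗ[ℝ] X) :
    ∃ C : ℝ, 0 < C ∧ ∀ x, NX.N (T x) ≤ C * NX.N x := by
  have hpne : p ≠ 0 := ne_of_gt hp0
  letI : NormedAddCommGroup X := AddGroupNorm.toNormedAddCommGroup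
    { toFun := fun x => NX.N x ^ p
      map_zero' := by show NX.N 0 ^ p = 0; rw [(NX.eq_zero_iff 0).mpr rfl, Real.zero_rpow hpne]
      add_le' := fun x y => NX.add_pow_le x y
      neg' := fun x => by show NX.N (-x) ^ p = NX.N x ^ p; rw [NX.neg']
      eq_zero_of_map_eq_zero' := fun x h => by
        have h1 : NX.N x = 0 := by
          by_contra hne
          have h2 : 0 < NX.N x := (NX.nonneg x).lt_of_ne' hne
          exact absurd h (by positivity)
        exact (NX.eq_zero_iff x).mp h1 }
  have hnorm : ∀ x : X, ‖x‖ = NX.N x ^ p := fun _ => rfl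
  have hsmul : ∀ (a : ℝ) (x : X), ‖a • x‖ = |a| ^ p * ‖x‖ := fun a x => by
    rw [hnorm, hnorm, NX.smul_eq, Real.mul_rpow (abs_nonneg a) (NX.nonneg x)]
  haveI : ContinuousSMul ℝ X := by
    apply ContinuousSMul.of_nhds_zero
    · rw [NormedAddCommGroup.tendsto_nhds_zero]
      intro ε hε
      have hs : ∀ᶠ a : ℝ in 𝓝 0, |a| < 1 := by
        simpa using eventually_abs_sub_lt (0 : ℝ) one_pos
      have ht : ∀ᶠ x : X in 𝓝 0, ‖x‖ < ε :=
        NormedAddCommGroup.tendsto_nhds_zero.mp tendsto_id ε hε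
      refine (hs.prod_mk ht).mono fun q hq => ?_
      calc ‖q.1 • q.2‖ = |q.1| ^ p * ‖q.2‖ := hsmul _ _
        _ ≤ 1 * ‖q.2‖ := mul_le_mul_of_nonneg_right
            (Real.rpow_le_one (abs_nonneg _) hq.1.le hp0.le) (norm_nonneg _)
        _ < ε := by rw [one_mul]; exact hq.2
    · intro m
      rw [NormedAddCommGroup.tendsto_nhds_zero]
      intro ε hε
      have hd : (0 : ℝ) < (ε / (‖m‖ + 1)) ^ p⁻¹ := by positivity
      have hs : ∀ᶠ a : ℝ in 𝓝 0, |a| < (ε / (‖m‖ + 1)) ^ p⁻¹ := by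
        simpa using eventually_abs_sub_lt (0 : ℝ) hd
      refine hs.mono fun a ha => ?_
      have h1 : |a| ^ p < ε / (‖m‖ + 1) := by
        calc |a| ^ p < ((ε / (‖m‖ + 1)) ^ p⁻¹) ^ p :=
              Real.rpow_lt_rpow (abs_nonneg _) ha hp0
          _ = ε / (‖m‖ + 1) := Real.rpow_inv_rpow (by positivity) hpne
      calc ‖a • m‖ = |a| ^ p * ‖m‖ := hsmul _ _
        _ ≤ |a| ^ p * (‖m‖ + 1) := by
            exact mul_le_mul_of_nonneg_left (by linarith [norm_nonneg m])
              (Real.rpow_nonneg (abs_nonneg _) p)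
        _ < (ε / (‖m‖ + 1)) * (‖m‖ + 1) := by
            have hm1 : (0 : ℝ) < ‖m‖ + 1 := by positivity
            exact mul_lt_mul_of_pos_right h1 hm1
        _ = ε := div_mul_cancel₀ ε (by positivity)
    · intro a
      rw [NormedAddCommGroup.tendsto_nhds_zero]
      intro ε hε
      have hd : (0 : ℝ) < ε / (|a| ^ p + 1) := by positivity
      have hs : ∀ᶠ x : X in 𝓝 0, ‖x‖ < ε / (|a| ^ p + 1) :=
        NormedAddCommGroup.tendsto_nhds_zero.mp tendsto_id _ hd
      refine hs.mono fun x hx => ?_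
      have hap : (0 : ℝ) ≤ |a| ^ p := Real.rpow_nonneg (abs_nonneg _) p
      calc ‖a • x‖ = |a| ^ p * ‖x‖ := hsmul _ _
        _ ≤ (|a| ^ p + 1) * ‖x‖ := mul_le_mul_of_nonneg_right (by linarith) (norm_nonneg _)
        _ < (|a| ^ p + 1) * (ε / (|a| ^ p + 1)) := by
            exact mul_lt_mul_of_pos_left hx (by positivity)
        _ = ε := by field_simp
  have hT : Continuous T := T.continuous_of_finiteDimensional
  obtain ⟨η, hη, hb⟩ := Metric.continuousAt_iff.mp (hT.continuousAt (x := 0)) 1 one_pos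
  refine ⟨((η / 2) ^ p⁻¹)⁻¹, by positivity, fun x => ?_⟩
  by_cases hx : x = 0
  · have : NX.N (T x) = 0 := by
      rw [hx, map_zero, (NX.eq_zero_iff 0).mpr rfl]
    rw [this, hx, (NX.eq_zero_iff 0).mpr rfl, mul_zero]
  · have hNx : 0 < NX.N x := (NX.nonneg x).lt_of_ne' (fun h => hx ((NX.eq_zero_iff x).mp h))
    set t : ℝ := (η / 2) ^ p⁻¹ / NX.N x with htdef
    have ht0 : 0 < t := by positivity
    have hNt : NX.N (t • x) = (η / 2) ^ p⁻¹ := by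
      rw [NX.smul_eq, abs_of_pos ht0, htdef, div_mul_cancel₀ _ hNx.ne']
    have hdist : dist (t • x) 0 < η := by
      rw [dist_zero_right, hnorm, hNt, Real.rpow_inv_rpow (by positivity) hpne]
      linarith
    have h1 := hb hdist
    rw [map_zero, dist_zero_right, hnorm] at h1
    have h2 : NX.N (T (t • x)) ≤ 1 := by
      by_contra hcon
      push_neg at hcon
      have h3 : (1 : ℝ) ^ p ≤ NX.N (T (t • x)) ^ p :=
        Real.rpow_le_rpow (by norm_num) hcon.le hp0.le
      rw [Real.one_rpow] at h3
      linarith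
    rw [map_smul, NX.smul_eq, abs_of_pos ht0] at h2
    have h3 : NX.N (T x) ≤ t⁻¹ := by
      rw [← one_div]
      rw [le_div_iff₀ ht0]
      linarith
    calc NX.N (T x) ≤ t⁻¹ := h3
      _ = ((η / 2) ^ p⁻¹)⁻¹ * NX.N x := by
          rw [htdef]
          field_simp
      _ ≤ ((η / 2) ^ p⁻¹)⁻¹ * NX.N x := le_rfl

private lemma exists_good_delta (p C ε' : ℝ) (hp0 : 0 < p) (hC : 0 < C) (hε : 0 < ε')
    (hε1 : ε' < 1) :
    ∃ δ : ℝ, 0 < δ ∧ δ < 1 ∧ (1 + δ) ^ p + (C * δ) ^ p ≤ (1 + ε') ^ p ∧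
      (1 - ε') ^ p ≤ (1 - δ) ^ p - (C * δ) ^ p := by
  have hpne : p ≠ 0 := ne_of_gt hp0
  have hF : ContinuousAt (fun δ : ℝ => (1 + δ) ^ p + (C * δ) ^ p) 0 := by
    apply ContinuousAt.add
    · exact (continuousAt_const.add continuousAt_id).rpow_const (by norm_num)
    · exact (continuousAt_const.mul continuousAt_id).rpow_const (Or.inr hp0.le)
  have hG : ContinuousAt (fun δ : ℝ => (1 - δ) ^ p - (C * δ) ^ p) 0 := by
    apply ContinuousAt.sub
    · exact (continuousAt_const.sub continuousAt_id).rpow_const (by norm_num)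
    · exact (continuousAt_const.mul continuousAt_id).rpow_const (Or.inr hp0.le)
  have hF0 : (fun δ : ℝ => (1 + δ) ^ p + (C * δ) ^ p) 0 = 1 := by
    simp [Real.zero_rpow hpne, Real.one_rpow]
  have hG0 : (fun δ : ℝ => (1 - δ) ^ p - (C * δ) ^ p) 0 = 1 := by
    simp [Real.zero_rpow hpne, Real.one_rpow]
  have h1 : (1 : ℝ) < (1 + ε') ^ p := by
    calc (1 : ℝ) = 1 ^ p := (Real.one_rpow p).symm
      _ < (1 + ε') ^ p := Real.rpow_lt_rpow (by norm_num) (by linarith) hp0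
  have h2 : (1 - ε') ^ p < 1 := by
    calc (1 - ε') ^ p < 1 ^ p := Real.rpow_lt_rpow (by linarith) (by linarith) hp0
      _ = 1 := Real.one_rpow p
  have e1 : ∀ᶠ δ : ℝ in 𝓝 0, (1 + δ) ^ p + (C * δ) ^ p < (1 + ε') ^ p := by
    have h : Filter.Tendsto (fun δ : ℝ => (1 + δ) ^ p + (C * δ) ^ p) (𝓝 0) (𝓝 1) := by
      simpa [Real.zero_rpow hpne] using hF.tendsto
    exact h.eventually_lt_const h1
  have e2 : ∀ᶠ δ : ℝ in 𝓝 0, (1 - ε') ^ p < (1 - δ) ^ p - (C * δ) ^ p := by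
    have h : Filter.Tendsto (fun δ : ℝ => (1 - δ) ^ p - (C * δ) ^ p) (𝓝 0) (𝓝 1) := by
      simpa [Real.zero_rpow hpne] using hG.tendsto
    exact h.eventually_const_lt h2
  have e3 : ∀ᶠ δ : ℝ in 𝓝 0, δ < 1 := tendsto_id.eventually_lt_const one_pos
  have e4 : ∀ᶠ δ : ℝ in 𝓝[>] (0:ℝ), (0:ℝ) < δ := eventually_mem_nhdsWithin
  have := (((e1.and e2).and e3).filter_mono nhdsWithin_le_nhds).and e4
  obtain ⟨δ, ⟨⟨hd1, hd2⟩, hd3⟩, hd4⟩ := this.exists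
  exact ⟨δ, hd4, hd3, hd1.le, hd2.le⟩

/-- if every isometry of a subspace of `U` into a finite-dimensional `p`-Banach
space admits an `ε`-isometric `ε`-approximate extension back into `U`, then `U` is of almost
universal disposition for finite-dimensional `p`-Banach spaces. -/
theorem statement4 (p : ℝ) (hp0 : 0 < p) (hp1 : p ≤ 1)
    (U : PBanach p)
    (hU : ∀ ε : ℝ, 0 < ε → ∀ Y : PBanach p, FiniteDimensional ℝ Y.carrier →
      ∀ (Xs : Submodule ℝ U.carrier) (g : Xs →ₗ[ℝ] Y.carrier),
        (∀ x : Xs, Y.pnorm.N (g x) = U.pnorm.N (x : U.carrier)) →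
        ∃ f : Y.carrier →ₗ[ℝ] U.carrier,
          (∀ y, (1 - ε) * Y.pnorm.N y ≤ U.pnorm.N (f y) ∧
            U.pnorm.N (f y) ≤ (1 + ε) * Y.pnorm.N y) ∧
          ∀ x : Xs, U.pnorm.N (f (g x) - (x : U.carrier)) ≤ ε * U.pnorm.N (x : U.carrier)) :
    AUD p U.carrier U.pnorm := by
  intro ε hε Y hFD Xs g hg
  haveI := hFD
  set ε' : ℝ := min ε 2⁻¹ with hε'def
  have hε'0 : 0 < ε' := lt_min hε (by norm_num)
  have hε'le : ε' ≤ ε := min_le_left _ _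
  have hε'1 : ε' < 1 := lt_of_le_of_lt (min_le_right _ _) (by norm_num)
  -- g is injective
  have hginj : Function.Injective g := by
    rw [← LinearMap.ker_eq_bot, LinearMap.ker_eq_bot']
    intro m hm
    have h0 : U.pnorm.N (m : U.carrier) = 0 := by
      rw [← hg m, hm, (Y.pnorm.eq_zero_iff 0).mpr rfl]
    have : (m : U.carrier) = 0 := (U.pnorm.eq_zero_iff _).mp h0
    exact Subtype.ext this
  set Z : Submodule ℝ Y.carrier := LinearMap.range g with hZdef
  obtain ⟨W, hW⟩ := Z.exists_isCompl
  set π' : Y.carrier →ₗ[ℝ] Z := Z.projectionOnto W hW with hπ'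
  set T : Y.carrier →ₗ[ℝ] Y.carrier := Z.subtype.comp π' with hT
  obtain ⟨C, hC, hCb⟩ := exists_proj_bound p hp0 Y.carrier Y.pnorm T
  obtain ⟨δ, hδ0, hδ1, hδa, hδb⟩ := exists_good_delta p C ε' hp0 hC hε'0 hε'1
  obtain ⟨f₀, hf₀, happ⟩ := hU δ hδ0 Y hFD Xs g hg
  set e : Xs ≃ₗ[ℝ] Z := LinearEquiv.ofInjective g hginj with he
  set c : Y.carrier →ₗ[ℝ] U.carrier :=
    (Xs.subtype.comp e.symm.toLinearMap - f₀.comp Z.subtype).comp π' with hc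
  refine ⟨f₀ + c, ?_, ?_⟩
  · -- norm estimates
    intro y
    have hcy : U.pnorm.N (c y) ≤ (C * δ) * Y.pnorm.N y := by
      have hgx : g (e.symm (π' y)) = ((π' y : Z) : Y.carrier) := by
        have := e.apply_symm_apply (π' y)
        calc g (e.symm (π' y)) = ((e (e.symm (π' y)) : Z) : Y.carrier) := by
              rw [he]; exact (LinearEquiv.ofInjective_apply (h := hginj) g _).symm
          _ = ((π' y : Z) : Y.carrier) := by rw [this]
      have hcy' : c y = -(f₀ (g (e.symm (π' y))) - ((e.symm (π' y) : Xs) : U.carrier)) := by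
        simp only [hc, LinearMap.comp_apply, LinearMap.sub_apply, Submodule.subtype_apply,
          LinearEquiv.coe_toLinearMap, hgx]
        abel
      rw [hcy', PNorm.neg']
      calc U.pnorm.N (f₀ (g (e.symm (π' y))) - ((e.symm (π' y) : Xs) : U.carrier))
          ≤ δ * U.pnorm.N ((e.symm (π' y) : Xs) : U.carrier) := happ _
        _ = δ * Y.pnorm.N (g (e.symm (π' y))) := by rw [hg]
        _ = δ * Y.pnorm.N (T y) := by rw [hgx]; rfl
        _ ≤ δ * (C * Y.pnorm.N y) := by
            exact mul_le_mul_of_nonneg_left (hCb y) hδ0.le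
        _ = (C * δ) * Y.pnorm.N y := by ring
    have hny : 0 ≤ Y.pnorm.N y := Y.pnorm.nonneg y
    have hf0y := hf₀ y
    have hNfy : 0 ≤ U.pnorm.N (f₀ y + c y) := U.pnorm.nonneg _
    have hNc : 0 ≤ U.pnorm.N (c y) := U.pnorm.nonneg _
    have hNf0 : 0 ≤ U.pnorm.N (f₀ y) := U.pnorm.nonneg _
    have hup : U.pnorm.N (f₀ y + c y) ^ p ≤ ((1 + ε') * Y.pnorm.N y) ^ p := by
      calc U.pnorm.N (f₀ y + c y) ^ p ≤ U.pnorm.N (f₀ y) ^ p + U.pnorm.N (c y) ^ p :=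
            U.pnorm.add_pow_le _ _
        _ ≤ ((1 + δ) * Y.pnorm.N y) ^ p + ((C * δ) * Y.pnorm.N y) ^ p :=
            add_le_add (Real.rpow_le_rpow hNf0 hf0y.2 hp0.le)
              (Real.rpow_le_rpow hNc hcy hp0.le)
        _ = ((1 + δ) ^ p + (C * δ) ^ p) * Y.pnorm.N y ^ p := by
            rw [Real.mul_rpow (by linarith) hny, Real.mul_rpow (by positivity) hny]; ring
        _ ≤ (1 + ε') ^ p * Y.pnorm.N y ^ p := by
            exact mul_le_mul_of_nonneg_right hδa (Real.rpow_nonneg hny p)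
        _ = ((1 + ε') * Y.pnorm.N y) ^ p := (Real.mul_rpow (by linarith) hny).symm
    have hlow : ((1 - ε') * Y.pnorm.N y) ^ p ≤ U.pnorm.N (f₀ y + c y) ^ p := by
      have hmid : U.pnorm.N (f₀ y) ^ p ≤ U.pnorm.N (f₀ y + c y) ^ p + U.pnorm.N (c y) ^ p := by
        have h1 : f₀ y = (f₀ y + c y) + (-(c y)) := by abel
        calc U.pnorm.N (f₀ y) ^ p = U.pnorm.N ((f₀ y + c y) + (-(c y))) ^ p := by rw [← h1]
          _ ≤ U.pnorm.N (f₀ y + c y) ^ p + U.pnorm.N (-(c y)) ^ p := U.pnorm.add_pow_le _ _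
          _ = U.pnorm.N (f₀ y + c y) ^ p + U.pnorm.N (c y) ^ p := by rw [PNorm.neg']
      have h2 : ((1 - δ) * Y.pnorm.N y) ^ p ≤ U.pnorm.N (f₀ y) ^ p :=
        Real.rpow_le_rpow (mul_nonneg (by linarith) hny) hf0y.1 hp0.le
      have h3 : U.pnorm.N (c y) ^ p ≤ ((C * δ) * Y.pnorm.N y) ^ p :=
        Real.rpow_le_rpow hNc hcy hp0.le
      calc ((1 - ε') * Y.pnorm.N y) ^ p = (1 - ε') ^ p * Y.pnorm.N y ^ p :=
            Real.mul_rpow (by linarith) hny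
        _ ≤ ((1 - δ) ^ p - (C * δ) ^ p) * Y.pnorm.N y ^ p :=
            mul_le_mul_of_nonneg_right hδb (Real.rpow_nonneg hny p)
        _ = ((1 - δ) * Y.pnorm.N y) ^ p - ((C * δ) * Y.pnorm.N y) ^ p := by
            rw [Real.mul_rpow (by linarith) hny, Real.mul_rpow (by positivity) hny]; ring
        _ ≤ U.pnorm.N (f₀ y) ^ p - U.pnorm.N (c y) ^ p := by
            have := sub_le_sub h2 h3
            linarith [sub_le_sub h2 h3]
        _ ≤ U.pnorm.N (f₀ y + c y) ^ p := by linarith [hmid]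
    constructor
    · have : ((1 - ε') * Y.pnorm.N y) ≤ U.pnorm.N (f₀ y + c y) := by
        have hlhs : 0 ≤ (1 - ε') * Y.pnorm.N y := mul_nonneg (by linarith) hny
        exact (Real.rpow_le_rpow_iff hlhs hNfy hp0).mp hlow
      have h4 : (1 - ε) * Y.pnorm.N y ≤ (1 - ε') * Y.pnorm.N y :=
        mul_le_mul_of_nonneg_right (by linarith) hny
      calc (1 - ε) * Y.pnorm.N y ≤ (1 - ε') * Y.pnorm.N y := h4
        _ ≤ U.pnorm.N (f₀ y + c y) := this
        _ = U.pnorm.N ((f₀ + c) y) := rfl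
    · have : U.pnorm.N (f₀ y + c y) ≤ (1 + ε') * Y.pnorm.N y := by
        have hlhs : 0 ≤ (1 + ε') * Y.pnorm.N y := by positivity
        exact (Real.rpow_le_rpow_iff hNfy hlhs hp0).mp hup
      calc U.pnorm.N ((f₀ + c) y) = U.pnorm.N (f₀ y + c y) := rfl
        _ ≤ (1 + ε') * Y.pnorm.N y := this
        _ ≤ (1 + ε) * Y.pnorm.N y := mul_le_mul_of_nonneg_right (by linarith) hny
  · -- exact extension
    intro x
    have hmem : g x ∈ Z := LinearMap.mem_range_self g x
    have hπgx : π' (g x) = ⟨g x, hmem⟩ := by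
      have := Submodule.projectionOnto_apply_left hW (⟨g x, hmem⟩ : Z)
      simpa [hπ'] using this
    have hex : e x = ⟨g x, hmem⟩ := by
      apply Subtype.ext
      rw [he]
      exact LinearEquiv.ofInjective_apply (h := hginj) g x
    have hesymm : e.symm ⟨g x, hmem⟩ = x := by rw [← hex, e.symm_apply_apply]
    show f₀ (g x) + c (g x) = (x : U.carrier)
    simp only [hc, LinearMap.comp_apply, LinearMap.sub_apply, Submodule.subtype_apply,
      LinearEquiv.coe_toLinearMap, hπgx, hesymm]
    abel

end PGurarii
end

section
/- Let p ∈ (0,1], let ε ∈ (0,1), and let f : X → Y be an ε-isometry between p-normed spaces. Then there exists a p-norm M on the product space X × Y such that M (x, 0) = N_X(x) for all x ∈ X, M (0, y) = N_Y(y) for all y ∈ Y, and M (−x, f x) ≤ ε * N_X(x) for all x ∈ X (i.e. the canonical inclusions i : X → X × Y and j : Y → X × Y are isometries and the linear map j ∘ f − i has operator quasinorm at most ε). -/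
open scoped Pointwise

namespace PGurarii


private lemma aux_rpow_add {a b p : ℝ} (ha : 0 ≤ a) (hb : 0 ≤ b) (hq0 : 0 ≤ p) (hq1 : p ≤ 1) :
    (a + b) ^ p ≤ a ^ p + b ^ p := by
  have h := NNReal.rpow_add_le_add_rpow a.toNNReal b.toNNReal hq0 hq1
  have h' := NNReal.coe_le_coe.2 h
  push_cast at h'
  rwa [Real.coe_toNNReal _ ha, Real.coe_toNNReal _ hb] at h'

/-- given an `ε`-isometry `f : X → Y` between `p`-normed spaces, there is a `p`-norm
on `X × Y` making the canonical inclusions isometries and with `M (-x, f x) ≤ ε * N_X x`. -/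
theorem statement6 (p : ℝ) (hp0 : 0 < p) (hp1 : p ≤ 1)
    (X Y : Type) [AddCommGroup X] [Module ℝ X] [AddCommGroup Y] [Module ℝ Y]
    (NX : PNorm p X) (NY : PNorm p Y)
    (ε : ℝ) (hε0 : 0 < ε) (hε1 : ε < 1)
    (f : X →ₗ[ℝ] Y)
    (hf : ∀ x : X, (1 - ε) * NX.N x ≤ NY.N (f x) ∧ NY.N (f x) ≤ (1 + ε) * NX.N x) :
    ∃ M : PNorm p (X × Y),
      (∀ x : X, M.N (x, 0) = NX.N x) ∧
      (∀ y : Y, M.N (0, y) = NY.N y) ∧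
      ∀ x : X, M.N (-x, f x) ≤ ε * NX.N x := by
  have hp : p ≠ 0 := hp0.ne'
  -- the candidate `p`-th power functional
  set F : X × Y → X → ℝ := fun z u =>
    NX.N (z.1 + u) ^ p + ε ^ p * NX.N u ^ p + NY.N (z.2 - f u) ^ p with hFdef
  have hεp : (0:ℝ) < ε ^ p := Real.rpow_pos_of_pos hε0 p
  have hεp1 : ε ^ p ≤ 1 := Real.rpow_le_one hε0.le hε1.le hp0.le
  have hNX0 : NX.N 0 = 0 := (NX.eq_zero_iff 0).2 rfl
  have hNY0 : NY.N 0 = 0 := (NY.eq_zero_iff 0).2 rfl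
  have hNXneg : ∀ u : X, NX.N (-u) = NX.N u := fun u => by
    have := NX.smul_eq (-1) u
    simpa using this
  have hFnn : ∀ z u, 0 ≤ F z u := fun z u => by
    have h1 : (0:ℝ) ≤ NX.N (z.1 + u) ^ p := Real.rpow_nonneg (NX.nonneg _) p
    have h2 : (0:ℝ) ≤ NX.N u ^ p := Real.rpow_nonneg (NX.nonneg _) p
    have h3 : (0:ℝ) ≤ NY.N (z.2 - f u) ^ p := Real.rpow_nonneg (NY.nonneg _) p
    have : 0 ≤ ε ^ p * NX.N u ^ p := mul_nonneg hεp.le h2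
    simp only [hFdef]; linarith
  have hbdd : ∀ z, BddBelow (Set.range (F z)) := fun z =>
    ⟨0, by rintro r ⟨u, rfl⟩; exact hFnn z u⟩
  set Q : X × Y → ℝ := fun z => ⨅ u, F z u with hQdef
  have hQnn : ∀ z, 0 ≤ Q z := fun z => le_ciInf (hFnn z)
  have hQle : ∀ z u, Q z ≤ F z u := fun z u => ciInf_le (hbdd z) u
  -- value at (x, 0) is NX x ^ p, etc.
  have hQx : ∀ x : X, Q (x, 0) = NX.N x ^ p := by
    intro x
    have hub : Q (x, 0) ≤ NX.N x ^ p := by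
      have := hQle (x, 0) 0
      simpa [hFdef, hNX0, hNY0, Real.zero_rpow hp] using this
    have hlb : NX.N x ^ p ≤ Q (x, 0) := by
      refine le_ciInf fun u => ?_
      have h1 : NX.N x ^ p ≤ NX.N (x + u) ^ p + NX.N u ^ p := by
        have := NX.add_pow_le (x + u) (-u)
        simpa [hNXneg] using this
      have h2 : (1 - ε) * NX.N u ≤ NY.N (f u) := (hf u).1
      have h3 : ((1 - ε) * NX.N u) ^ p ≤ NY.N (f u) ^ p :=
        Real.rpow_le_rpow (mul_nonneg (by linarith) (NX.nonneg u)) h2 hp0.le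
      have h4 : ((1 - ε) * NX.N u) ^ p = (1 - ε) ^ p * NX.N u ^ p :=
        Real.mul_rpow (by linarith) (NX.nonneg u)
      have h5 : ε ≤ ε ^ p := by
        calc ε = ε ^ (1:ℝ) := (Real.rpow_one ε).symm
        _ ≤ ε ^ p := Real.rpow_le_rpow_of_exponent_ge hε0 hε1.le hp1
      have h6 : 1 - ε ≤ (1 - ε) ^ p := by
        calc 1 - ε = (1 - ε) ^ (1:ℝ) := (Real.rpow_one _).symm
        _ ≤ (1 - ε) ^ p := Real.rpow_le_rpow_of_exponent_ge (by linarith) (by linarith) hp1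
      have h7 : NX.N u ^ p ≤ ε ^ p * NX.N u ^ p + (1 - ε) ^ p * NX.N u ^ p := by
        have hnn : (0:ℝ) ≤ NX.N u ^ p := Real.rpow_nonneg (NX.nonneg u) p
        nlinarith
      have h8 : (1 - ε) ^ p * NX.N u ^ p ≤ NY.N (f u) ^ p := by rw [← h4]; exact h3
      have hC : NY.N ((0:Y) - f u) ^ p = NY.N (f u) ^ p := by
        have : NY.N (-(f u)) = NY.N (f u) := by
          have := NY.smul_eq (-1) (f u); simpa using this
        rw [zero_sub, this]
      simp only [hFdef, hC]
      linarith
    linarith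
  have hQy : ∀ y : Y, Q (0, y) = NY.N y ^ p := by
    intro y
    have hub : Q (0, y) ≤ NY.N y ^ p := by
      have := hQle (0, y) 0
      simpa [hFdef, hNX0, hNY0, Real.zero_rpow hp] using this
    have hlb : NY.N y ^ p ≤ Q (0, y) := by
      refine le_ciInf fun u => ?_
      have h1 : NY.N y ^ p ≤ NY.N (y - f u) ^ p + NY.N (f u) ^ p := by
        have := NY.add_pow_le (y - f u) (f u)
        simpa using this
      have h2 : NY.N (f u) ≤ (1 + ε) * NX.N u := (hf u).2
      have h3 : NY.N (f u) ^ p ≤ ((1 + ε) * NX.N u) ^ p :=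
        Real.rpow_le_rpow (NY.nonneg _) h2 hp0.le
      have h4 : ((1 + ε) * NX.N u) ^ p = (1 + ε) ^ p * NX.N u ^ p :=
        Real.mul_rpow (by linarith) (NX.nonneg u)
      have h5 : (1 + ε) ^ p ≤ 1 + ε ^ p := by
        have h := aux_rpow_add (zero_le_one (α := ℝ)) hε0.le hp0.le hp1
        simpa [Real.one_rpow] using h
      have hnn : (0:ℝ) ≤ NX.N u ^ p := Real.rpow_nonneg (NX.nonneg u) p
      have h6 : NY.N (f u) ^ p ≤ NX.N u ^ p + ε ^ p * NX.N u ^ p := by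
        calc NY.N (f u) ^ p ≤ (1 + ε) ^ p * NX.N u ^ p := by rw [← h4]; exact h3
        _ ≤ (1 + ε ^ p) * NX.N u ^ p := mul_le_mul_of_nonneg_right h5 hnn
        _ = NX.N u ^ p + ε ^ p * NX.N u ^ p := by ring
      simp only [hFdef]
      have : NX.N ((0:X) + u) = NX.N u := by rw [zero_add]
      rw [this]
      linarith
    linarith
  -- homogeneity of Q
  have hQ0 : Q 0 = 0 := by
    have := hQx 0
    simpa [hNX0, Real.zero_rpow hp] using (show Q 0 = NX.N 0 ^ p from this)
  have hQsmul : ∀ (a : ℝ) (z : X × Y), Q (a • z) = |a| ^ p * Q z := by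
    intro a z
    rcases eq_or_ne a 0 with rfl | ha
    · simp [hQ0, Real.zero_rpow hp]
    · have hF : ∀ u : X, F (a • z) (a • u) = |a| ^ p * F z u := by
        intro u
        have e1 : (a • z).1 + a • u = a • (z.1 + u) := by
          simp [smul_add]
        have e2 : (a • z).2 - f (a • u) = a • (z.2 - f u) := by
          simp [smul_sub, map_smul]
        have habs : (0:ℝ) ≤ |a| := abs_nonneg a
        simp only [hFdef, e1, e2, NX.smul_eq, NY.smul_eq,
          Real.mul_rpow habs (NX.nonneg _), Real.mul_rpow habs (NY.nonneg _)]
        ring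
      have hrange : Set.range (F (a • z)) = (|a| ^ p) • Set.range (F z) := by
        ext r
        constructor
        · rintro ⟨u, rfl⟩
          refine ⟨F z (a⁻¹ • u), ⟨a⁻¹ • u, rfl⟩, ?_⟩
          have := hF (a⁻¹ • u)
          rw [smul_smul, mul_inv_cancel₀ ha, one_smul] at this
          simp [this, smul_eq_mul]
        · rintro ⟨s, ⟨u, rfl⟩, rfl⟩
          exact ⟨a • u, (hF u).symm ▸ by simp [smul_eq_mul]⟩
      have : Q (a • z) = sInf (Set.range (F (a • z))) := rfl
      rw [this, hrange, Real.sInf_smul_of_nonneg (Real.rpow_nonneg (abs_nonneg a) p)]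
      simp [smul_eq_mul, hQdef, iInf]
  -- lower bounds forcing Q z = 0 → z = 0
  have hlow1 : ∀ z u, ε ^ p * NX.N z.1 ^ p ≤ F z u := by
    intro z u
    have h1 : NX.N z.1 ^ p ≤ NX.N (z.1 + u) ^ p + NX.N u ^ p := by
      have := NX.add_pow_le (z.1 + u) (-u)
      simpa [hNXneg] using this
    have hA : (0:ℝ) ≤ NX.N (z.1 + u) ^ p := Real.rpow_nonneg (NX.nonneg _) p
    have hB : (0:ℝ) ≤ NX.N u ^ p := Real.rpow_nonneg (NX.nonneg _) p
    have hC : (0:ℝ) ≤ NY.N (z.2 - f u) ^ p := Real.rpow_nonneg (NY.nonneg _) p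
    simp only [hFdef]
    nlinarith
  have hlow2 : ∀ z u, ε ^ p * NY.N z.2 ^ p ≤ (1 + ε ^ p) * F z u := by
    intro z u
    have h1 : NY.N z.2 ^ p ≤ NY.N (z.2 - f u) ^ p + NY.N (f u) ^ p := by
      have := NY.add_pow_le (z.2 - f u) (f u)
      simpa using this
    have h2 : NY.N (f u) ^ p ≤ (1 + ε ^ p) * NX.N u ^ p := by
      have h3 : NY.N (f u) ^ p ≤ ((1 + ε) * NX.N u) ^ p :=
        Real.rpow_le_rpow (NY.nonneg _) (hf u).2 hp0.le
      have h4 : ((1 + ε) * NX.N u) ^ p = (1 + ε) ^ p * NX.N u ^ p :=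
        Real.mul_rpow (by linarith) (NX.nonneg u)
      have h5 : (1 + ε) ^ p ≤ 1 + ε ^ p := by
        have h := aux_rpow_add (zero_le_one (α := ℝ)) hε0.le hp0.le hp1
        simpa [Real.one_rpow] using h
      have hnn : (0:ℝ) ≤ NX.N u ^ p := Real.rpow_nonneg (NX.nonneg u) p
      calc NY.N (f u) ^ p ≤ (1 + ε) ^ p * NX.N u ^ p := by rw [← h4]; exact h3
      _ ≤ (1 + ε ^ p) * NX.N u ^ p := mul_le_mul_of_nonneg_right h5 hnn
    have hA : (0:ℝ) ≤ NX.N (z.1 + u) ^ p := Real.rpow_nonneg (NX.nonneg _) p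
    have hB : (0:ℝ) ≤ NX.N u ^ p := Real.rpow_nonneg (NX.nonneg _) p
    have hC : (0:ℝ) ≤ NY.N (z.2 - f u) ^ p := Real.rpow_nonneg (NY.nonneg _) p
    simp only [hFdef]
    nlinarith
  -- triangle inequality for Q
  have hQadd : ∀ z w, Q (z + w) ≤ Q z + Q w := by
    intro z w
    refine le_ciInf_add_ciInf fun u v => ?_
    have step : F (z + w) (u + v) ≤ F z u + F w v := by
      have e1 : (z + w).1 + (u + v) = (z.1 + u) + (w.1 + v) := by
        simp [Prod.fst_add]; abel
      have e2 : (z + w).2 - f (u + v) = (z.2 - f u) + (w.2 - f v) := by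
        simp [Prod.snd_add, map_add]; abel
      have t1 : NX.N ((z + w).1 + (u + v)) ^ p ≤ NX.N (z.1 + u) ^ p + NX.N (w.1 + v) ^ p := by
        rw [e1]; exact NX.add_pow_le _ _
      have t2 : NX.N (u + v) ^ p ≤ NX.N u ^ p + NX.N v ^ p := NX.add_pow_le u v
      have t2' : ε ^ p * NX.N (u + v) ^ p ≤ ε ^ p * NX.N u ^ p + ε ^ p * NX.N v ^ p := by
        nlinarith
      have t3 : NY.N ((z + w).2 - f (u + v)) ^ p ≤
          NY.N (z.2 - f u) ^ p + NY.N (w.2 - f v) ^ p := by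
        rw [e2]; exact NY.add_pow_le _ _
      simp only [hFdef]
      linarith
    exact (hQle (z + w) (u + v)).trans step
  -- build the p-norm
  refine ⟨{ N := fun z => Q z ^ (1 / p)
            nonneg := fun z => Real.rpow_nonneg (hQnn z) _
            eq_zero_iff := ?_
            smul_eq := ?_
            add_pow_le := ?_ }, ?_, ?_, ?_⟩
  case refine_1 =>
    intro z
    constructor
    · intro h
      have hQz : Q z = 0 := by
        have := (Real.rpow_eq_zero (hQnn z) (by positivity)).1 h
        exact this
      have hz1 : NX.N z.1 ^ p = 0 := by
        have h1 : ε ^ p * NX.N z.1 ^ p ≤ Q z := le_ciInf (hlow1 z)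
        have hnn : (0:ℝ) ≤ NX.N z.1 ^ p := Real.rpow_nonneg (NX.nonneg _) p
        nlinarith [hQz ▸ h1]
      have hz2 : NY.N z.2 ^ p = 0 := by
        have h1 : ∀ u, ε ^ p * NY.N z.2 ^ p / (1 + ε ^ p) ≤ F z u := by
          intro u
          rw [div_le_iff₀ (by positivity)]
          have := hlow2 z u
          linarith [mul_comm (1 + ε ^ p) (F z u) ▸ this]
        have h2 : ε ^ p * NY.N z.2 ^ p / (1 + ε ^ p) ≤ Q z := le_ciInf h1
        have hnn : (0:ℝ) ≤ NY.N z.2 ^ p := Real.rpow_nonneg (NY.nonneg _) p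
        rw [hQz, div_le_iff₀ (by positivity)] at h2
        nlinarith
      have e1 : z.1 = 0 := (NX.eq_zero_iff z.1).1 ((Real.rpow_eq_zero (NX.nonneg _) hp).1 hz1)
      have e2 : z.2 = 0 := (NY.eq_zero_iff z.2).1 ((Real.rpow_eq_zero (NY.nonneg _) hp).1 hz2)
      exact Prod.ext e1 e2
    · rintro rfl
      show Q (0 : X × Y) ^ (1 / p) = 0
      rw [hQ0, Real.zero_rpow (by positivity)]
  case refine_2 =>
    intro a z
    show Q (a • z) ^ (1 / p) = |a| * Q z ^ (1 / p)
    rw [hQsmul a z, Real.mul_rpow (Real.rpow_nonneg (abs_nonneg a) p) (hQnn z),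
      ← Real.rpow_mul (abs_nonneg a), mul_one_div_cancel hp, Real.rpow_one]
  case refine_3 =>
    intro z w
    have key : ∀ w', (Q w' ^ (1 / p)) ^ p = Q w' := fun w' => by
      rw [← Real.rpow_mul (hQnn w'), one_div_mul_cancel hp, Real.rpow_one]
    show (Q (z + w) ^ (1 / p)) ^ p ≤ (Q z ^ (1 / p)) ^ p + (Q w ^ (1 / p)) ^ p
    rw [key, key, key]
    exact hQadd z w
  · intro x
    show Q (x, 0) ^ (1 / p) = NX.N x
    rw [hQx, ← Real.rpow_mul (NX.nonneg x), mul_one_div_cancel hp, Real.rpow_one]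
  · intro y
    show Q (0, y) ^ (1 / p) = NY.N y
    rw [hQy, ← Real.rpow_mul (NY.nonneg y), mul_one_div_cancel hp, Real.rpow_one]
  · intro x
    show Q (-x, f x) ^ (1 / p) ≤ ε * NX.N x
    have hub : Q (-x, f x) ≤ (ε * NX.N x) ^ p := by
      have := hQle (-x, f x) x
      have e : F (-x, f x) x = ε ^ p * NX.N x ^ p := by
        simp [hFdef, hNX0, hNY0, Real.zero_rpow hp]
      rw [e] at this
      rwa [Real.mul_rpow hε0.le (NX.nonneg x)]
    calc Q (-x, f x) ^ (1 / p) ≤ ((ε * NX.N x) ^ p) ^ (1 / p) :=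
          Real.rpow_le_rpow (hQnn _) hub (by positivity)
    _ = ε * NX.N x := by
        rw [← Real.rpow_mul (mul_nonneg hε0.le (NX.nonneg x)), mul_one_div_cancel hp,
          Real.rpow_one]


end PGurarii
end
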